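/- arXiv:2410.14502 — 8 statements merged into one kernel-verified Lean document; each statement's English description precedes it below -/
import Mathlib

section
/- For all indices 1 ≤ i, j ≤ N, the integral of the edge polynomial h_i over the j-th sub-interval satisfies ∫_{ξ_{j-1}}^{ξ_j} h_i(ξ) dξ = δ_{ij}, where δ_{ij} is the Kronecker delta. -/
open Polynomial MeasureTheory

/-- Fix `N ≥ 1` and nodes `-1 = ξ₀ < ξ₁ < ⋯ < ξ_N = 1`.  Let `l i` be the
Lagrange basis polynomials (`deg ≤ N`, `l i (ξ j) = δᵢⱼ`) and let `h i` (for `i = 1, …, N`,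
here indexed by `i : Fin N` representing `h_{i+1}`) be the edge polynomials
`h_i = -∑_{j=0}^{i-1} l_j'`.  Then `∫_{ξ_{j-1}}^{ξ_j} h_i = δᵢⱼ`. -/
theorem edge_polynomial_subinterval_integral
    (N : ℕ) (hN : 1 ≤ N) (ξ : Fin (N + 1) → ℝ)
    (hmono : StrictMono ξ) (hfirst : ξ 0 = -1) (hlast : ξ (Fin.last N) = 1)
    (l : Fin (N + 1) → Polynomial ℝ)
    (hdeg : ∀ i, (l i).natDegree ≤ N)
    (hlag : ∀ i j, (l i).eval (ξ j) = if i = j then 1 else 0)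
    (h : Fin N → Polynomial ℝ)
    (hdef : ∀ i : Fin N,
      h i = -∑ j : Fin (N + 1), if (j : ℕ) < (i : ℕ) + 1 then derivative (l j) else 0) :
    ∀ i j : Fin N,
      (∫ t in (ξ j.castSucc)..(ξ j.succ), (h i).eval t) = if i = j then 1 else 0 := by
  intro i j
  have key : ∀ p : Polynomial ℝ,
      (∫ t in (ξ j.castSucc)..(ξ j.succ), (derivative p).eval t)
        = p.eval (ξ j.succ) - p.eval (ξ j.castSucc) := by
    intro p
    have := intervalIntegral.integral_deriv_eq_sub (f := fun x => p.eval x)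
      (a := ξ j.castSucc) (b := ξ j.succ)
      (fun x _ => p.differentiableAt)
      (by
        have hd : (deriv fun x => p.eval x) = fun x => (derivative p).eval x :=
          funext fun x => Polynomial.deriv (p := p) (x := x)
        rw [hd]
        exact (Polynomial.continuous _).intervalIntegrable _ _)
    have hd : (deriv fun x => p.eval x) = fun x => (derivative p).eval x :=
      funext fun x => Polynomial.deriv (p := p) (x := x)
    rw [hd] at this
    exact this
  rw [hdef]
  simp only [Polynomial.eval_neg, Polynomial.eval_finset_sum, apply_ite (Polynomial.eval ·),
    Polynomial.eval_zero]
  rw [intervalIntegral.integral_neg,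
    intervalIntegral.integral_finset_sum (fun k _ => by
      by_cases hk : (k : ℕ) < (i : ℕ) + 1
      · simp only [hk, if_true]
        exact (Polynomial.continuous _).intervalIntegrable _ _
      · simp [hk, intervalIntegrable_const])]
  have hterm : ∀ k : Fin (N + 1),
      (∫ t in (ξ j.castSucc)..(ξ j.succ),
        Polynomial.eval t (if (k : ℕ) < (i : ℕ) + 1 then derivative (l k) else 0))
        = if (k : ℕ) < (i : ℕ) + 1 then
            ((if k = j.succ then (1:ℝ) else 0) - (if k = j.castSucc then 1 else 0)) else 0 := by
    intro k
    by_cases hk : (k : ℕ) < (i : ℕ) + 1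
    · simp only [hk, if_true]
      rw [key, hlag, hlag]
    · simp [hk]
  simp only [hterm]
  have hsum : ∀ a : Fin (N + 1),
      (∑ k : Fin (N + 1), if (k : ℕ) < (i : ℕ) + 1 then (if k = a then (1:ℝ) else 0) else 0)
        = if (a : ℕ) < (i : ℕ) + 1 then 1 else 0 := by
    intro a
    rw [Finset.sum_eq_single a]
    · simp
    · intro b _ hb; simp [hb]
    · simp
  have hsplit : ∀ k : Fin (N + 1),
      (if (k : ℕ) < (i : ℕ) + 1 then
          ((if k = j.succ then (1:ℝ) else 0) - (if k = j.castSucc then 1 else 0)) else 0)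
        = (if (k : ℕ) < (i : ℕ) + 1 then (if k = j.succ then (1:ℝ) else 0) else 0)
          - (if (k : ℕ) < (i : ℕ) + 1 then (if k = j.castSucc then (1:ℝ) else 0) else 0) := by
    intro k; by_cases hk : (k : ℕ) < (i : ℕ) + 1 <;> simp [hk]
  simp only [hsplit]
  rw [Finset.sum_sub_distrib, hsum, hsum]
  simp only [Fin.val_succ, Fin.coe_castSucc, Fin.ext_iff]
  rcases lt_trichotomy (i : ℕ) (j : ℕ) with hij | hij | hij <;>
    · split_ifs <;> first | omega | norm_num
end

section
/- The histopolation operator reproduces polynomials of degree at most N−1: if q is a polynomial of degree ≤ N−1, then p²(q) = q. -/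
open Polynomial MeasureTheory

/-- Telescoping helper. -/
lemma histo_tele (n : ℕ) (c : ℕ → ℝ) (k : ℕ) (hk : k ≤ n) :
    ∑ i ∈ Finset.range n, (if k < i + 1 then c i - c (i + 1) else 0) = c k - c n := by
  have h1 : ∀ i ∈ Finset.range n, (if k < i + 1 then c i - c (i + 1) else 0)
      = if i ∈ Finset.Ico k n then c i - c (i + 1) else 0 := by
    intro i hi
    simp only [Finset.mem_range] at hi
    simp only [Finset.mem_Ico]
    congr 1
    simp only [eq_iff_iff]
    omega
  rw [Finset.sum_congr rfl h1, Finset.sum_ite_mem]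
  have h2 : Finset.range n ∩ Finset.Ico k n = Finset.Ico k n := by
    apply Finset.inter_eq_right.mpr
    intro i hi
    simp only [Finset.mem_Ico] at hi
    simp only [Finset.mem_range]
    omega
  rw [h2, Finset.sum_Ico_eq_sum_range]
  have h3 := Finset.sum_range_sub' (fun i => c (k + i)) (n - k)
  simp only [← Nat.add_assoc] at h3
  rw [h3, Nat.add_zero, Nat.add_sub_cancel' hk]

/-- Existence of a polynomial antiderivative over ℝ. -/
lemma histo_antideriv (q : Polynomial ℝ) :
    ∃ Q : Polynomial ℝ, derivative Q = q ∧ Q.natDegree ≤ q.natDegree + 1 := by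
  refine ⟨∑ n ∈ Finset.range (q.natDegree + 1),
    Polynomial.monomial (n + 1) (q.coeff n / (n + 1)), ?_, ?_⟩
  · rw [derivative_sum]
    conv_rhs => rw [q.as_sum_range' (q.natDegree + 1) (Nat.lt_succ_self _)]
    refine Finset.sum_congr rfl fun n _ => ?_
    rw [derivative_monomial]
    simp only [Nat.add_sub_cancel, Nat.cast_add, Nat.cast_one]
    congr 1
    have : (n : ℝ) + 1 ≠ 0 := by positivity
    field_simp
  · refine (Polynomial.natDegree_sum_le _ _).trans ?_
    rw [Finset.fold_max_le]
    refine ⟨by omega, fun n hn => ?_⟩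
    refine (Polynomial.natDegree_monomial_le _).trans ?_
    simp only [Finset.mem_range] at hn
    omega

/-- The histopolation operator
`p²(f) = ∑_{i=1}^N (∫_{ξ_{i-1}}^{ξ_i} f) hᵢ` reproduces polynomials of degree at most `N - 1`:
if `q` is a polynomial with `deg q ≤ N - 1`, then `p²(q) = q`. -/
theorem histopolation_reproduces_polynomials
    (N : ℕ) (hN : 1 ≤ N) (ξ : Fin (N + 1) → ℝ)
    (hmono : StrictMono ξ) (hfirst : ξ 0 = -1) (hlast : ξ (Fin.last N) = 1)
    (l : Fin (N + 1) → Polynomial ℝ)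
    (hdeg : ∀ i, (l i).natDegree ≤ N)
    (hlag : ∀ i j, (l i).eval (ξ j) = if i = j then 1 else 0)
    (h : Fin N → Polynomial ℝ)
    (hdef : ∀ i : Fin N,
      h i = -∑ j : Fin (N + 1), if (j : ℕ) < (i : ℕ) + 1 then derivative (l j) else 0) :
    ∀ q : Polynomial ℝ, q.natDegree ≤ N - 1 →
      (∑ i : Fin N, (∫ s in (ξ i.castSucc)..(ξ i.succ), q.eval s) • h i) = q := by
  intro q hq
  classical
  have hinj : Function.Injective ξ := hmono.injective
  -- uniqueness of interpolation
  have huniq : ∀ P : Polynomial ℝ, P.natDegree ≤ N → (∀ j, P.eval (ξ j) = 0) → P = 0 := by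
    intro P hP hev
    refine Polynomial.eq_zero_of_natDegree_lt_card_of_eval_eq_zero P hinj hev ?_
    simp only [Fintype.card_fin]
    omega
  -- antiderivative
  obtain ⟨Q, hQd, hQdeg⟩ := histo_antideriv q
  have hQN : Q.natDegree ≤ N := by omega
  set a : Fin (N + 1) → ℝ := fun j => Q.eval (ξ j) with ha
  -- Lagrange exactness for Q
  have hQrep : Q = ∑ j : Fin (N + 1), a j • l j := by
    have h0 : Q - ∑ j : Fin (N + 1), a j • l j = 0 := by
      apply huniq
      · refine (Polynomial.natDegree_sub_le _ _).trans (max_le hQN ?_)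
        refine (Polynomial.natDegree_sum_le _ _).trans ?_
        rw [Finset.fold_max_le]
        exact ⟨by omega, fun j _ => (Polynomial.natDegree_smul_le _ _).trans (hdeg j)⟩
      · intro k
        simp only [Polynomial.eval_sub, Polynomial.eval_finset_sum, Polynomial.eval_smul,
          hlag, smul_eq_mul, mul_ite, mul_one, mul_zero]
        rw [Finset.sum_ite_eq' Finset.univ k a]
        simp
        exact sub_self _
    exact sub_eq_zero.mp h0
  -- the Lagrange basis sums to 1
  have hsum1 : (∑ j : Fin (N + 1), l j) = 1 := by
    have h0 : (∑ j : Fin (N + 1), l j) - 1 = 0 := by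
      apply huniq
      · refine (Polynomial.natDegree_sub_le _ _).trans (max_le ?_ ?_)
        · refine (Polynomial.natDegree_sum_le _ _).trans ?_
          rw [Finset.fold_max_le]
          exact ⟨by omega, fun j _ => hdeg j⟩
        · simp
      · intro k
        simp only [Polynomial.eval_sub, Polynomial.eval_finset_sum, hlag, Polynomial.eval_one]
        rw [Finset.sum_ite_eq' Finset.univ k (fun _ => (1 : ℝ))]
        simp
    exact sub_eq_zero.mp h0
  have hDsum : (∑ j : Fin (N + 1), derivative (l j)) = 0 := by
    rw [← derivative_sum, hsum1]
    simp
  -- derivative representation of q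
  have hqrep : q = ∑ j : Fin (N + 1), a j • derivative (l j) := by
    conv_lhs => rw [← hQd, hQrep]
    rw [derivative_sum]
    exact Finset.sum_congr rfl fun j _ => derivative_smul _ _
  -- the interval integrals
  have hint : ∀ i : Fin N, (∫ s in (ξ i.castSucc)..(ξ i.succ), q.eval s)
      = a i.succ - a i.castSucc := by
    intro i
    refine intervalIntegral.integral_eq_sub_of_hasDerivAt (f := fun x => Q.eval x)
      (fun x _ => ?_) ((q.continuous_aeval).intervalIntegrable _ _)
    have := Q.hasDerivAt x
    rwa [hQd] at this
  -- natural-number reindexing of the node values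
  set c : ℕ → ℝ := fun n => if hn : n ≤ N then Q.eval (ξ ⟨n, by omega⟩) else 0 with hc
  have hcj : ∀ j : Fin (N + 1), c (j : ℕ) = a j := by
    intro j
    have hj : (j : ℕ) ≤ N := by omega
    simp only [hc, hj, dif_pos]
    rfl
  have hclast : c N = a (Fin.last N) := by
    have := hcj (Fin.last N)
    simpa using this
  have hccast : ∀ i : Fin N, c (i : ℕ) = a i.castSucc := by
    intro i
    have := hcj i.castSucc
    simpa using this
  have hcsucc : ∀ i : Fin N, c ((i : ℕ) + 1) = a i.succ := by
    intro i
    have := hcj i.succ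
    simpa using this
  -- main computation
  calc (∑ i : Fin N, (∫ s in (ξ i.castSucc)..(ξ i.succ), q.eval s) • h i)
      = ∑ i : Fin N, ∑ j : Fin (N + 1),
          (if (j : ℕ) < (i : ℕ) + 1 then a i.castSucc - a i.succ else 0) • derivative (l j) := by
        refine Finset.sum_congr rfl fun i _ => ?_
        rw [hint i, hdef i, smul_neg, Finset.smul_sum, ← Finset.sum_neg_distrib]
        refine Finset.sum_congr rfl fun j _ => ?_
        split_ifs with hij
        · rw [← neg_smul, neg_sub]
        · simp
    _ = ∑ j : Fin (N + 1), (∑ i : Fin N,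
          (if (j : ℕ) < (i : ℕ) + 1 then a i.castSucc - a i.succ else 0)) • derivative (l j) := by
        rw [Finset.sum_comm]
        exact Finset.sum_congr rfl fun j _ => (Finset.sum_smul).symm
    _ = ∑ j : Fin (N + 1), (a j - a (Fin.last N)) • derivative (l j) := by
        refine Finset.sum_congr rfl fun j _ => ?_
        congr 1
        have : (∑ i : Fin N, (if (j : ℕ) < (i : ℕ) + 1 then a i.castSucc - a i.succ else 0))
            = ∑ n ∈ Finset.range N, (if (j : ℕ) < n + 1 then c n - c (n + 1) else 0) := by
          rw [show (∑ i : Fin N, (if (j : ℕ) < (i : ℕ) + 1 then a i.castSucc - a i.succ else 0))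
              = ∑ i : Fin N, (if (j : ℕ) < (i : ℕ) + 1 then c (i : ℕ) - c ((i : ℕ) + 1) else 0)
            from Finset.sum_congr rfl fun i _ => by rw [hccast i, hcsucc i]]
          exact Fin.sum_univ_eq_sum_range
            (fun n => if (j : ℕ) < n + 1 then c n - c (n + 1) else 0) N
        rw [this, histo_tele N c (j : ℕ) (by omega), hcj j, hclast]
    _ = (∑ j : Fin (N + 1), a j • derivative (l j))
          - a (Fin.last N) • (∑ j : Fin (N + 1), derivative (l j)) := by
        rw [Finset.smul_sum, ← Finset.sum_sub_distrib]
        refine Finset.sum_congr rfl fun j _ => ?_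
        rw [sub_smul]
    _ = q := by rw [hDsum, smul_zero, sub_zero, ← hqrep]
end

section
/- The edge polynomials h_1, …, h_N form a basis of the space of polynomials of degree at most N−1; equivalently, the linear map sending a polynomial q of degree ≤ N−1 to the vector of its sub-interval integrals (∫_{ξ_{j−1}}^{ξ_j} q)_{j=1}^{N} ∈ ℝ^N is a linear isomorphism. -/
open Polynomial MeasureTheory

private lemma integral_poly_derivative (p : Polynomial ℝ) (a b : ℝ) :
    ∫ s in a..b, (derivative p).eval s = p.eval b - p.eval a := by
  have hd : deriv (fun x => p.eval x) = fun s => (derivative p).eval s :=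
    funext fun x => p.deriv
  rw [← hd]
  exact intervalIntegral.integral_deriv_eq_sub
    (fun x _ => (p.hasDerivAt x).differentiableAt)
    (by rw [hd]; exact (Polynomial.continuous _).intervalIntegrable _ _)

private noncomputable def intPhi (N : ℕ) (ξ : Fin (N + 1) → ℝ) : Polynomial ℝ →ₗ[ℝ] (Fin N → ℝ) where
  toFun q := fun j => ∫ s in ξ j.castSucc..ξ j.succ, q.eval s
  map_add' p q := funext fun j => by
    simp only [eval_add, Pi.add_apply]
    exact intervalIntegral.integral_add ((Polynomial.continuous p).intervalIntegrable _ _)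
      ((Polynomial.continuous q).intervalIntegrable _ _)
  map_smul' c p := funext fun j => by
    simp only [eval_smul, smul_eq_mul, RingHom.id_apply, Pi.smul_apply]
    exact intervalIntegral.integral_const_mul _ _

/-- The edge polynomials `h₁, …, h_N` form a basis of the space of polynomials
of degree at most `N - 1` (i.e. of `degreeLT ℝ N`); equivalently, the linear map sending a
polynomial `q` with `deg q ≤ N - 1` to the vector of its sub-interval integrals
`(∫_{ξ_{j-1}}^{ξ_j} q)_{j=1}^N ∈ ℝ^N` is a linear isomorphism. -/
theorem edge_polynomials_basis_and_subinterval_integral_iso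
    (N : ℕ) (hN : 1 ≤ N) (ξ : Fin (N + 1) → ℝ)
    (hmono : StrictMono ξ) (hfirst : ξ 0 = -1) (hlast : ξ (Fin.last N) = 1)
    (l : Fin (N + 1) → Polynomial ℝ)
    (hdeg : ∀ i, (l i).natDegree ≤ N)
    (hlag : ∀ i j, (l i).eval (ξ j) = if i = j then 1 else 0)
    (h : Fin N → Polynomial ℝ)
    (hdef : ∀ i : Fin N,
      h i = -∑ j : Fin (N + 1), if (j : ℕ) < (i : ℕ) + 1 then derivative (l j) else 0) :
    (LinearIndependent ℝ h ∧ Submodule.span ℝ (Set.range h) = Polynomial.degreeLT ℝ N) ∧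
    ∃ e : Polynomial.degreeLT ℝ N ≃ₗ[ℝ] (Fin N → ℝ),
      ∀ (q : Polynomial.degreeLT ℝ N) (j : Fin N),
        e q j = ∫ s in (ξ j.castSucc)..(ξ j.succ), (q : Polynomial ℝ).eval s := by
  set Φ := intPhi N ξ with hΦ
  -- membership of the edge polynomials in degreeLT
  have hmem : ∀ i : Fin N, h i ∈ degreeLT ℝ N := by
    intro i
    rw [hdef i]
    refine Submodule.neg_mem _ (Submodule.sum_mem _ fun k _ => ?_)
    split_ifs
    · rw [Polynomial.mem_degreeLT]
      by_cases hz : derivative (l k) = 0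
      · rw [hz, Polynomial.degree_zero]
        exact WithBot.bot_lt_coe _
      · have hnd : (l k).natDegree ≠ 0 := by
          intro h0
          obtain ⟨c, hc⟩ := Polynomial.natDegree_eq_zero.mp h0
          rw [← hc, Polynomial.derivative_C] at hz
          exact hz rfl
        have hlt := Polynomial.natDegree_derivative_lt hnd
        exact (Polynomial.natDegree_lt_iff_degree_lt hz).mp (hlt.trans_le (hdeg k))
    · exact Submodule.zero_mem _
  -- Φ maps h i to the i-th standard basis vector
  have key : ∀ i : Fin N, Φ (h i) = Pi.single i (1 : ℝ) := by
    intro i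
    funext j
    have hint : ∀ k : Fin (N + 1),
        IntervalIntegrable
          (fun s => ((if (k : ℕ) < (i : ℕ) + 1 then derivative (l k) else 0)).eval s)
          volume (ξ j.castSucc) (ξ j.succ) :=
      fun k => (Polynomial.continuous _).intervalIntegrable _ _
    have step : ∀ k : Fin (N + 1),
        (∫ s in ξ j.castSucc..ξ j.succ,
            ((if (k : ℕ) < (i : ℕ) + 1 then derivative (l k) else 0)).eval s)
        = (if k = j.succ then (if (k : ℕ) < (i : ℕ) + 1 then (1 : ℝ) else 0) else 0)
          - (if k = j.castSucc then (if (k : ℕ) < (i : ℕ) + 1 then (1 : ℝ) else 0) else 0) := by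
      intro k
      by_cases hc : (k : ℕ) < (i : ℕ) + 1
      · rw [if_pos hc, integral_poly_derivative, hlag, hlag]
        split_ifs <;> simp_all
      · rw [if_neg hc]
        simp [hc]
    show (∫ s in ξ j.castSucc..ξ j.succ, (h i).eval s) = _
    rw [hdef i]
    simp only [eval_neg, eval_finset_sum]
    rw [intervalIntegral.integral_neg, intervalIntegral.integral_finset_sum (fun k _ => hint k),
      Finset.sum_congr rfl (fun k _ => step k), Finset.sum_sub_distrib,
      Finset.sum_ite_eq' Finset.univ (j.succ), Finset.sum_ite_eq' Finset.univ (j.castSucc)]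
    simp only [Finset.mem_univ, if_true, Fin.val_succ, Fin.coe_castSucc, Pi.single_apply,
      Fin.ext_iff]
    split_ifs
    all_goals (first | omega | norm_num)
  -- linear independence
  have hli : LinearIndependent ℝ h := by
    have h2 : Φ ∘ h = ⇑(Pi.basisFun ℝ (Fin N)) := by
      funext i
      simp [key i, Pi.basisFun_apply]
    exact LinearIndependent.of_comp Φ (h2 ▸ (Pi.basisFun ℝ (Fin N)).linearIndependent)
  haveI : Module.Finite ℝ (degreeLT ℝ N) := Module.Finite.equiv (degreeLTEquiv ℝ N).symm
  have hfr : Module.finrank ℝ (degreeLT ℝ N) = N := by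
    rw [(degreeLTEquiv ℝ N).finrank_eq, Module.finrank_fin_fun]
  have hspan : Submodule.span ℝ (Set.range h) = degreeLT ℝ N := by
    apply Submodule.eq_of_le_of_finrank_le
      (Submodule.span_le.2 (Set.range_subset_iff.2 hmem))
    rw [hfr, finrank_span_eq_card hli, Fintype.card_fin]
  -- the linear isomorphism
  set φ : degreeLT ℝ N →ₗ[ℝ] (Fin N → ℝ) := Φ.comp (degreeLT ℝ N).subtype with hφ
  have hsurj : Function.Surjective φ := by
    rw [← LinearMap.range_eq_top, ← top_le_iff, ← (Pi.basisFun ℝ (Fin N)).span_eq]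
    refine Submodule.span_le.2 (Set.range_subset_iff.2 fun i => ?_)
    refine ⟨⟨h i, hmem i⟩, ?_⟩
    simp [hφ, key i, Pi.basisFun_apply]
  have hinj : Function.Injective φ :=
    (LinearMap.injective_iff_surjective_of_finrank_eq_finrank
      (by rw [hfr, Module.finrank_fin_fun])).2 hsurj
  exact ⟨⟨hli, hspan⟩, LinearEquiv.ofBijective φ ⟨hinj, hsurj⟩, fun q j => rfl⟩
end

section
/- The one-dimensional de Rham diagram commutes: for every continuously differentiable function f on [−1,1], the derivative of the interpolant equals the histopolant of the derivative, i.e. (I^N f)' = p²(f'); explicitly, (I^N f)' = ∑_{i=1}^N (f(ξ_i) − f(ξ_{i−1})) h_i. -/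
open Polynomial MeasureTheory

/-- The 1D de Rham diagram commutes: for every continuously differentiable
function `f` on `[-1,1]`, the derivative of the interpolant `I^N f = ∑_{i=0}^N f(ξᵢ) lᵢ`
equals the histopolant of the derivative, `(I^N f)' = p²(f')`; explicitly
`(I^N f)' = ∑_{i=1}^N (f(ξᵢ) - f(ξ_{i-1})) hᵢ`. -/
theorem interpolation_derivative_eq_histopolation_of_derivative
    (N : ℕ) (hN : 1 ≤ N) (ξ : Fin (N + 1) → ℝ)
    (hmono : StrictMono ξ) (hfirst : ξ 0 = -1) (hlast : ξ (Fin.last N) = 1)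
    (l : Fin (N + 1) → Polynomial ℝ)
    (hdeg : ∀ i, (l i).natDegree ≤ N)
    (hlag : ∀ i j, (l i).eval (ξ j) = if i = j then 1 else 0)
    (h : Fin N → Polynomial ℝ)
    (hdef : ∀ i : Fin N,
      h i = -∑ j : Fin (N + 1), if (j : ℕ) < (i : ℕ) + 1 then derivative (l j) else 0)
    (f : ℝ → ℝ) (hf : ContDiffOn ℝ 1 f (Set.Icc (-1 : ℝ) 1)) :
    derivative (∑ i : Fin (N + 1), f (ξ i) • l i)
      = ∑ i : Fin N,
          (∫ s in (ξ i.castSucc)..(ξ i.succ), derivWithin f (Set.Icc (-1 : ℝ) 1) s) • h i ∧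
    derivative (∑ i : Fin (N + 1), f (ξ i) • l i)
      = ∑ i : Fin N, (f (ξ i.succ) - f (ξ i.castSucc)) • h i := by
  classical
  -- bounds on the nodes
  have hlb : ∀ k : Fin (N + 1), (-1 : ℝ) ≤ ξ k := fun k => by
    rw [← hfirst]; exact hmono.monotone (Fin.zero_le k)
  have hub : ∀ k : Fin (N + 1), ξ k ≤ 1 := fun k => by
    rw [← hlast]; exact hmono.monotone (Fin.le_last k)
  -- the Lagrange basis sums to 1, so derivatives sum to 0
  have hsum1 : (∑ j : Fin (N + 1), l j) = C 1 := by
    have hz : (∑ j : Fin (N + 1), l j) - C 1 = 0 := by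
      apply Polynomial.eq_zero_of_natDegree_lt_card_of_eval_eq_zero _ hmono.injective
      · intro k
        simp [eval_finset_sum, hlag, Finset.sum_ite_eq']
      · refine lt_of_le_of_lt (natDegree_sub_le _ _) ?_
        have h1 : (∑ j : Fin (N + 1), l j).natDegree ≤ N :=
          natDegree_sum_le_of_forall_le _ _ (fun i _ => hdeg i)
        have h2 : (C (1 : ℝ)).natDegree = 0 := natDegree_C _
        simp only [Fintype.card_fin]
        omega
    have := sub_eq_zero.mp hz
    exact this
  have hsumL : (∑ j : Fin (N + 1), derivative (l j)) = 0 := by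
    rw [← derivative_sum, hsum1, derivative_C]
  -- the main algebraic identity
  have key : derivative (∑ i : Fin (N + 1), f (ξ i) • l i)
      = ∑ i : Fin N, (f (ξ i.succ) - f (ξ i.castSucc)) • h i := by
    set A : ℕ → ℝ := fun n => f (ξ ⟨min n N, by omega⟩) with hA
    have hAc : ∀ i : Fin N, f (ξ i.castSucc) = A i.val := by
      intro i
      have : (⟨min i.val N, by omega⟩ : Fin (N + 1)) = i.castSucc := by
        ext; simp [Nat.min_eq_left i.isLt.le]
      simp only [hA]; rw [this]
    have hAs : ∀ i : Fin N, f (ξ i.succ) = A (i.val + 1) := by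
      intro i
      have : (⟨min (i.val + 1) N, by omega⟩ : Fin (N + 1)) = i.succ := by
        ext; simp [Nat.min_eq_left i.isLt]
      simp only [hA]; rw [this]
    have hAj : ∀ j : Fin (N + 1), f (ξ j) = A j.val := by
      intro j
      have : (⟨min j.val N, by omega⟩ : Fin (N + 1)) = j := by
        ext; simp [Nat.min_eq_left (Nat.lt_succ_iff.mp j.isLt)]
      simp only [hA]; rw [this]
    have hAN : f (ξ (Fin.last N)) = A N := by
      simpa using hAj (Fin.last N)
    -- telescoping
    have tele : ∀ j : Fin (N + 1),
        (∑ i : Fin N, if (j : ℕ) < (i : ℕ) + 1 then A i.val - A (i.val + 1) else 0)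
          = A j.val - A N := by
      intro j
      rw [Fin.sum_univ_eq_sum_range (fun i => if (j : ℕ) < i + 1 then A i - A (i + 1) else 0) N]
      have hjN : (j : ℕ) ≤ N := Nat.lt_succ_iff.mp j.isLt
      calc (∑ i ∈ Finset.range N, if (j : ℕ) < i + 1 then A i - A (i + 1) else 0)
          = ∑ i ∈ Finset.Ico (j : ℕ) N, (A i - A (i + 1)) := by
            rw [← Finset.sum_filter]
            congr 1
            rw [Finset.range_eq_Ico]
            rw [show (Finset.Ico (j:ℕ) N) = Finset.Ico (max 0 (j:ℕ)) N by simp]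
            rw [← Finset.Ico_filter_le 0 N (j : ℕ)]
            congr 1
            ext x
            simp [Nat.lt_succ_iff]
        _ = ∑ i ∈ Finset.range (N - (j : ℕ)), (A ((j : ℕ) + i) - A ((j : ℕ) + i + 1)) := by
            rw [Finset.sum_Ico_eq_sum_range]
        _ = A ((j : ℕ) + 0) - A ((j : ℕ) + (N - (j : ℕ))) := by
            simp only [add_assoc]
            rw [Finset.sum_range_sub' (fun i => A ((j : ℕ) + i))]
        _ = A j.val - A N := by rw [Nat.add_sub_cancel' hjN]; simp
    rw [derivative_sum]
    simp only [derivative_smul]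
    calc (∑ i : Fin (N + 1), f (ξ i) • derivative (l i))
        = ∑ j : Fin (N + 1), (A j.val - A N) • derivative (l j)
          + A N • ∑ j : Fin (N + 1), derivative (l j) := by
          rw [Finset.smul_sum, ← Finset.sum_add_distrib]
          refine Finset.sum_congr rfl fun j _ => ?_
          rw [hAj j, ← add_smul]
          ring_nf
      _ = ∑ j : Fin (N + 1), (A j.val - A N) • derivative (l j) := by
          rw [hsumL, smul_zero, add_zero]
      _ = ∑ j : Fin (N + 1),
            (∑ i : Fin N, if (j : ℕ) < (i : ℕ) + 1 then A i.val - A (i.val + 1) else 0)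
              • derivative (l j) := by
          refine Finset.sum_congr rfl fun j _ => ?_
          rw [tele j]
      _ = ∑ j : Fin (N + 1), ∑ i : Fin N,
            (if (j : ℕ) < (i : ℕ) + 1 then (A i.val - A (i.val + 1)) • derivative (l j) else 0) := by
          refine Finset.sum_congr rfl fun j _ => ?_
          rw [Finset.sum_smul]
          refine Finset.sum_congr rfl fun i _ => ?_
          split <;> simp
      _ = ∑ i : Fin N, ∑ j : Fin (N + 1),
            (if (j : ℕ) < (i : ℕ) + 1 then (A i.val - A (i.val + 1)) • derivative (l j) else 0) := by
          rw [Finset.sum_comm]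
      _ = ∑ i : Fin N, (f (ξ i.succ) - f (ξ i.castSucc)) • h i := by
          refine Finset.sum_congr rfl fun i _ => ?_
          rw [hdef i, smul_neg, ← neg_smul, Finset.smul_sum]
          refine Finset.sum_congr rfl fun j _ => ?_
          rw [hAs i, hAc i]
          split <;> simp [neg_smul, neg_sub]
  refine ⟨?_, key⟩
  rw [key]
  refine Finset.sum_congr rfl fun i _ => ?_
  congr 1
  -- FTC
  have hab : ξ i.castSucc ≤ ξ i.succ := (hmono (Fin.castSucc_lt_succ : i.castSucc < i.succ)).le
  have hsub : Set.Icc (ξ i.castSucc) (ξ i.succ) ⊆ Set.Icc (-1 : ℝ) 1 :=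
    Set.Icc_subset_Icc (hlb _) (hub _)
  rw [intervalIntegral.integral_eq_sub_of_hasDeriv_right_of_le hab
    (hf.continuousOn.mono hsub)
    (fun x hx => by
      have hx1 : x ∈ Set.Ioo (-1 : ℝ) 1 :=
        ⟨lt_of_le_of_lt (hlb _) hx.1, lt_of_lt_of_le hx.2 (hub _)⟩
      have hmem : x ∈ Set.Icc (-1 : ℝ) 1 := Set.Ioo_subset_Icc_self hx1
      have hd : HasDerivWithinAt f (derivWithin f (Set.Icc (-1 : ℝ) 1) x)
          (Set.Icc (-1 : ℝ) 1) x :=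
        (hf.differentiableOn one_ne_zero x hmem).hasDerivWithinAt
      have : HasDerivAt f (derivWithin f (Set.Icc (-1 : ℝ) 1) x) x :=
        hd.hasDerivAt (Icc_mem_nhds hx1.1 hx1.2)
      exact this.hasDerivWithinAt)
    (((hf.continuousOn_derivWithin (uniqueDiffOn_Icc (by norm_num)) le_rfl).mono
      hsub).intervalIntegrable_of_Icc hab)]
end

section
/- The two-dimensional mixed commuting property holds: for every continuously differentiable function f on [−1,1]², the η-derivative of the tensor-product interpolant equals the mixed interpolation–histopolation projection of ∂f/∂η, i.e. ∂/∂η [∑_{i=0}^N ∑_{j=0}^N f(ξ_i, ξ_j) l_i(ξ) l_j(η)] = ∑_{i=0}^N ∑_{j=1}^N (∫_{ξ_{j−1}}^{ξ_j} (∂f/∂η)(ξ_i, s) ds) l_i(ξ) h_j(η) for all (ξ, η) ∈ [−1,1]². -/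
open Polynomial MeasureTheory

lemma sum_ite_range (g : ℕ → ℝ) {m n : ℕ} (h : m ≤ n) :
    ∑ k ∈ Finset.range n, (if k < m then g k else 0) = ∑ k ∈ Finset.range m, g k := by
  rw [← Finset.sum_range_add_sum_Ico _ h]
  have h1 : ∑ k ∈ Finset.range m, (if k < m then g k else 0) = ∑ k ∈ Finset.range m, g k :=
    Finset.sum_congr rfl (fun k hk => by simp [Finset.mem_range.1 hk])
  have h2 : ∑ k ∈ Finset.Ico m n, (if k < m then g k else 0) = 0 :=
    Finset.sum_eq_zero (fun k hk => by simp [Nat.not_lt.2 (Finset.mem_Ico.1 hk).1])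
  rw [h1, h2, add_zero]

lemma abel_sum (A D : ℕ → ℝ) (n : ℕ) :
    ∑ j ∈ Finset.range n, (A (j+1) - A j) * (-(∑ k ∈ Finset.range (j+1), D k))
      = ∑ k ∈ Finset.range n, A k * D k - A n * ∑ k ∈ Finset.range n, D k := by
  induction n with
  | zero => simp
  | succ n ih =>
    rw [Finset.sum_range_succ, ih, Finset.sum_range_succ (fun k => A k * D k),
      Finset.sum_range_succ D]
    ring

lemma key_identity (n : ℕ) (F D : Fin (n+1) → ℝ) (hD : ∑ k, D k = 0) :
    ∑ j : Fin n, (F j.succ - F j.castSucc) *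
        (-(∑ k : Fin (n+1), if (k:ℕ) < (j:ℕ)+1 then D k else 0))
      = ∑ k, F k * D k := by
  classical
  set A : ℕ → ℝ := fun k => if h : k < n+1 then F ⟨k, h⟩ else 0 with hA
  set D' : ℕ → ℝ := fun k => if h : k < n+1 then D ⟨k, h⟩ else 0 with hD'
  have hAk : ∀ k : Fin (n+1), A (k : ℕ) = F k := fun k => by simp only [hA]; exact dif_pos k.isLt
  have hDk : ∀ k : Fin (n+1), D' (k : ℕ) = D k := fun k => by simp only [hD']; exact dif_pos k.isLt
  have hDsum : ∑ k ∈ Finset.range (n+1), D' k = 0 := by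
    rw [← hD, ← Fin.sum_univ_eq_sum_range]
    exact Finset.sum_congr rfl fun k _ => hDk k
  have hinner : ∀ j : Fin n,
      (∑ k : Fin (n+1), if (k:ℕ) < (j:ℕ)+1 then D k else 0)
        = ∑ k ∈ Finset.range ((j:ℕ)+1), D' k := by
    intro j
    rw [← sum_ite_range D' (by omega : (j:ℕ)+1 ≤ n+1), ← Fin.sum_univ_eq_sum_range]
    exact Finset.sum_congr rfl fun k _ => by by_cases hk : (k:ℕ) < (j:ℕ)+1 <;> simp [hk, hDk k]
  calc ∑ j : Fin n, (F j.succ - F j.castSucc) *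
        (-(∑ k : Fin (n+1), if (k:ℕ) < (j:ℕ)+1 then D k else 0))
      = ∑ j ∈ Finset.range n, (A (j+1) - A j) * (-(∑ k ∈ Finset.range (j+1), D' k)) := by
        rw [← Fin.sum_univ_eq_sum_range]
        refine Finset.sum_congr rfl fun j _ => ?_
        rw [hinner j]
        congr 1
        have h1 : A ((j:ℕ)+1) = F j.succ := by
          have := hAk j.succ; simpa using this
        have h2 : A (j:ℕ) = F j.castSucc := by
          have := hAk j.castSucc; simpa using this
        rw [h1, h2]
    _ = ∑ k ∈ Finset.range n, A k * D' k - A n * ∑ k ∈ Finset.range n, D' k := abel_sum A D' n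
    _ = ∑ k, F k * D k := by
        have hfin : ∑ k, F k * D k = ∑ k ∈ Finset.range (n+1), A k * D' k := by
          rw [← Fin.sum_univ_eq_sum_range]
          exact Finset.sum_congr rfl fun k _ => by rw [hAk k, hDk k]
        have hDn : ∑ k ∈ Finset.range n, D' k = - D' n := by
          rw [Finset.sum_range_succ] at hDsum; linarith
        rw [hfin, Finset.sum_range_succ, hDn]; ring

/-- The 2D mixed commuting property: for every continuously differentiable
function `f` on `[-1,1]²`, the `η`-derivative of the tensor-product interpolant
`∑_{i,j} f(ξᵢ,ξⱼ) lᵢ(ξ) lⱼ(η)` equals the mixed interpolation–histopolation projection of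
`∂f/∂η`, i.e. `∑_{i=0}^N ∑_{j=1}^N (∫_{ξ_{j-1}}^{ξ_j} ∂f/∂η(ξᵢ,s) ds) lᵢ(ξ) hⱼ(η)`,
for all `(ξ, η) ∈ [-1,1]²`. -/
theorem tensor_interpolant_eta_derivative_eq_mixed_projection
    (N : ℕ) (hN : 1 ≤ N) (ξ : Fin (N + 1) → ℝ)
    (hmono : StrictMono ξ) (hfirst : ξ 0 = -1) (hlast : ξ (Fin.last N) = 1)
    (l : Fin (N + 1) → Polynomial ℝ)
    (hdeg : ∀ i, (l i).natDegree ≤ N)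
    (hlag : ∀ i j, (l i).eval (ξ j) = if i = j then 1 else 0)
    (h : Fin N → Polynomial ℝ)
    (hdef : ∀ i : Fin N,
      h i = -∑ j : Fin (N + 1), if (j : ℕ) < (i : ℕ) + 1 then derivative (l j) else 0)
    (f : ℝ × ℝ → ℝ)
    (hf : ContDiffOn ℝ 1 f (Set.Icc (-1 : ℝ) 1 ×ˢ Set.Icc (-1 : ℝ) 1)) :
    ∀ x ∈ Set.Icc (-1 : ℝ) 1, ∀ y ∈ Set.Icc (-1 : ℝ) 1,
      deriv (fun t => ∑ i : Fin (N + 1), ∑ j : Fin (N + 1),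
          f (ξ i, ξ j) * (l i).eval x * (l j).eval t) y
        = ∑ i : Fin (N + 1), ∑ j : Fin N,
            (∫ s in (ξ j.castSucc)..(ξ j.succ),
                derivWithin (fun t => f (ξ i, t)) (Set.Icc (-1 : ℝ) 1) s)
              * (l i).eval x * (h j).eval y := by
  intro x hx y hy
  classical
  -- the Lagrange basis sums to 1
  have hcard : Fintype.card (Fin (N + 1)) = N + 1 := Fintype.card_fin _
  have hsum_one : (∑ k : Fin (N + 1), l k) = C 1 := by
    have hz : ((∑ k : Fin (N + 1), l k) - C 1) = 0 := by
      apply Polynomial.eq_zero_of_natDegree_lt_card_of_eval_eq_zero _ hmono.injective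
      · intro j
        simp [eval_finset_sum, hlag, Finset.sum_ite_eq']
      · rw [hcard]
        refine Nat.lt_succ_of_le ?_
        refine le_trans (natDegree_sub_le _ _) ?_
        simp only [natDegree_C, max_le_iff]
        exact ⟨Polynomial.natDegree_sum_le_of_forall_le _ _ (fun i _ => hdeg i), Nat.zero_le N⟩
    exact sub_eq_zero.mp hz
  have hDsum : ∑ k : Fin (N + 1), (derivative (l k)).eval y = 0 := by
    have h2 : (∑ k : Fin (N + 1), derivative (l k)) = 0 := by
      rw [← map_sum, hsum_one]; simp
    calc ∑ k : Fin (N + 1), (derivative (l k)).eval y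
        = (∑ k : Fin (N + 1), derivative (l k)).eval y := by rw [eval_finset_sum]
      _ = 0 := by rw [h2, eval_zero]
  -- nodes lie in [-1,1]
  have hξmem : ∀ i, ξ i ∈ Set.Icc (-1 : ℝ) 1 := fun i =>
    ⟨hfirst ▸ hmono.monotone (Fin.zero_le i), hlast ▸ hmono.monotone (Fin.le_last i)⟩
  -- FTC for each segment
  have hFTC : ∀ (i : Fin (N + 1)) (j : Fin N),
      (∫ s in (ξ j.castSucc)..(ξ j.succ),
          derivWithin (fun t => f (ξ i, t)) (Set.Icc (-1 : ℝ) 1) s)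
        = f (ξ i, ξ j.succ) - f (ξ i, ξ j.castSucc) := by
    intro i j
    have hgc : ContDiffOn ℝ 1 (fun t => f (ξ i, t)) (Set.Icc (-1 : ℝ) 1) := by
      apply hf.comp ((contDiff_const.prodMk contDiff_id).contDiffOn)
      intro t ht
      exact Set.mk_mem_prod (hξmem i) ht
    have hab : ξ j.castSucc ≤ ξ j.succ := (hmono (Fin.castSucc_lt_succ : j.castSucc < j.succ)).le
    have hsub : Set.Icc (ξ j.castSucc) (ξ j.succ) ⊆ Set.Icc (-1 : ℝ) 1 :=
      Set.Icc_subset_Icc (hξmem _).1 (hξmem _).2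
    have huniq : UniqueDiffOn ℝ (Set.Icc (-1 : ℝ) 1) := uniqueDiffOn_Icc (by norm_num)
    refine intervalIntegral.integral_eq_sub_of_hasDeriv_right_of_le
      (f := fun t => f (ξ i, t))
      (f' := fun s => derivWithin (fun t => f (ξ i, t)) (Set.Icc (-1 : ℝ) 1) s) hab ?_ ?_ ?_
    · exact hgc.continuousOn.mono hsub
    · intro t ht
      have ht' : t ∈ Set.Ioo (-1 : ℝ) 1 := Set.Ioo_subset_Ioo (hξmem _).1 (hξmem _).2 ht
      have hmem : Set.Icc (-1 : ℝ) 1 ∈ nhds t := Icc_mem_nhds ht'.1 ht'.2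
      have hd : DifferentiableWithinAt ℝ (fun t => f (ξ i, t)) (Set.Icc (-1 : ℝ) 1) t :=
        (hgc.differentiableOn one_ne_zero) t (Set.mem_Icc_of_Ioo ht')
      exact (hd.hasDerivWithinAt.hasDerivAt hmem).hasDerivWithinAt
    · apply ContinuousOn.intervalIntegrable
      apply (hgc.continuousOn_derivWithin huniq le_rfl).mono
      rw [Set.uIcc_of_le hab]; exact hsub
  -- derivative of the tensor interpolant
  have hL : deriv (fun t => ∑ i : Fin (N + 1), ∑ j : Fin (N + 1),
        f (ξ i, ξ j) * (l i).eval x * (l j).eval t) y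
      = ∑ i : Fin (N + 1), ∑ j : Fin (N + 1),
          f (ξ i, ξ j) * (l i).eval x * (derivative (l j)).eval y := by
    have hfun : (fun t => ∑ i : Fin (N + 1), ∑ j : Fin (N + 1),
          f (ξ i, ξ j) * (l i).eval x * (l j).eval t)
        = fun t => (∑ i : Fin (N + 1), ∑ j : Fin (N + 1),
            C (f (ξ i, ξ j) * (l i).eval x) * l j).eval t := by
      funext t; simp [eval_finset_sum, mul_assoc]
    rw [hfun, Polynomial.deriv]
    simp [map_sum, derivative_C_mul, eval_finset_sum, mul_assoc]
  rw [hL]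
  refine Finset.sum_congr rfl fun i _ => ?_
  have hkey := key_identity N (fun j => f (ξ i, ξ j) * (l i).eval x)
    (fun j => (derivative (l j)).eval y) hDsum
  rw [← hkey]
  refine Finset.sum_congr rfl fun j _ => ?_
  rw [hFTC i j, hdef j]
  simp only [eval_neg, eval_finset_sum, apply_ite (eval y), eval_zero]
  ring
end

section
/- The three-dimensional gradient commuting property holds in the first coordinate: for every continuously differentiable function f on [−1,1]³, the ξ-derivative of the tensor-product interpolant I³f(ξ,η,ζ) = ∑_{i,j,k=0}^N f(ξ_i, ξ_j, ξ_k) l_i(ξ) l_j(η) l_k(ζ) equals the mixed histopolation–interpolation projection of ∂f/∂ξ, i.e. ∂/∂ξ (I³f)(ξ,η,ζ) = ∑_{i=1}^N ∑_{j=0}^N ∑_{k=0}^N (∫_{ξ_{i−1}}^{ξ_i} (∂f/∂ξ)(s, ξ_j, ξ_k) ds) h_i(ξ) l_j(η) l_k(ζ) = ∑_{i=1}^N ∑_{j=0}^N ∑_{k=0}^N (f(ξ_i, ξ_j, ξ_k) − f(ξ_{i−1}, ξ_j, ξ_k)) h_i(ξ) l_j(η) l_k(ζ). -/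
open Polynomial MeasureTheory

private lemma abel_range (C D : ℕ → ℝ) (n : ℕ) :
    ∑ i ∈ Finset.range n, (C (i + 1) - C i) * (-(∑ j ∈ Finset.range (i + 1), D j))
      = ∑ j ∈ Finset.range (n + 1), C j * D j - C n * ∑ j ∈ Finset.range (n + 1), D j := by
  induction n with
  | zero => simp
  | succ n ih =>
      rw [Finset.sum_range_succ, ih,
        Finset.sum_range_succ (fun j => C j * D j) (n + 1),
        Finset.sum_range_succ D (n + 1)]
      ring

private lemma abel_fin (N : ℕ) (c d : Fin (N + 1) → ℝ) (hd : ∑ j, d j = 0) :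
    ∑ i : Fin N, (c i.succ - c i.castSucc)
        * (-(∑ j : Fin (N + 1), if (j : ℕ) < (i : ℕ) + 1 then d j else 0))
      = ∑ j, c j * d j := by
  classical
  set C : ℕ → ℝ := fun n => if h : n < N + 1 then c ⟨n, h⟩ else 0 with hC
  set D : ℕ → ℝ := fun n => if h : n < N + 1 then d ⟨n, h⟩ else 0 with hD
  have hCc : ∀ i : Fin (N + 1), C (i : ℕ) = c i := fun i => by
    simp [hC, i.isLt]; intro h; exact absurd h (by omega)
  have hDd : ∀ i : Fin (N + 1), D (i : ℕ) = d i := fun i => by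
    simp [hD, i.isLt]; intro h; exact absurd h (by omega)
  have hinner : ∀ i : Fin N,
      (∑ j : Fin (N + 1), if (j : ℕ) < (i : ℕ) + 1 then d j else 0)
        = ∑ j ∈ Finset.range ((i : ℕ) + 1), D j := by
    intro i
    have h1 : (∑ j : Fin (N + 1), if (j : ℕ) < (i : ℕ) + 1 then d j else 0)
        = ∑ j ∈ Finset.range (N + 1), (if j < (i : ℕ) + 1 then D j else 0) := by
      rw [Finset.sum_range fun j => if j < (i : ℕ) + 1 then D j else 0]
      refine Finset.sum_congr rfl fun j _ => ?_
      by_cases hj : (j : ℕ) < (i : ℕ) + 1 <;> simp [hj, hDd]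
    have hsub : Finset.range ((i : ℕ) + 1) ⊆ Finset.range (N + 1) :=
      Finset.range_subset_range.2 (by omega)
    rw [h1, ← Finset.sum_subset hsub (fun x _ hx => by
      simp only [Finset.mem_range, not_lt] at hx
      simp [if_neg (not_lt.2 hx)]; intro h; exact absurd h (by omega))]
    exact Finset.sum_congr rfl fun j hj => by
      simp only [Finset.mem_range] at hj; simp [hj]
  have hL : ∑ i : Fin N, (c i.succ - c i.castSucc)
        * (-(∑ j : Fin (N + 1), if (j : ℕ) < (i : ℕ) + 1 then d j else 0))
      = ∑ i ∈ Finset.range N, (C (i + 1) - C i) * (-(∑ j ∈ Finset.range (i + 1), D j)) := by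
    rw [Finset.sum_range fun i => (C (i + 1) - C i) * (-(∑ j ∈ Finset.range (i + 1), D j))]
    refine Finset.sum_congr rfl fun i _ => ?_
    rw [hinner i]
    congr 2
    · rw [← hCc i.succ]; rfl
    · rw [← hCc i.castSucc]; rfl
  have hDsum : ∑ j ∈ Finset.range (N + 1), D j = 0 := by
    rw [Finset.sum_range fun j => D j, ← hd]
    exact Finset.sum_congr rfl fun j _ => hDd j
  rw [hL, abel_range, hDsum, mul_zero, sub_zero,
    Finset.sum_range fun j => C j * D j]
  exact Finset.sum_congr rfl fun j _ => by rw [hCc, hDd]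

/-- The 3D gradient commuting property in the first coordinate: for every
continuously differentiable `f` on `[-1,1]³`, the `ξ`-derivative of the tensor-product
interpolant `I³f = ∑_{i,j,k} f(ξᵢ,ξⱼ,ξₖ) lᵢ(ξ) lⱼ(η) lₖ(ζ)` equals the mixed
histopolation–interpolation projection of `∂f/∂ξ`, namely
`∑_{i=1}^N ∑_{j,k=0}^N (∫_{ξ_{i-1}}^{ξ_i} ∂f/∂ξ(s,ξⱼ,ξₖ) ds) hᵢ(ξ) lⱼ(η) lₖ(ζ)
 = ∑_{i=1}^N ∑_{j,k=0}^N (f(ξᵢ,ξⱼ,ξₖ) - f(ξ_{i-1},ξⱼ,ξₖ)) hᵢ(ξ) lⱼ(η) lₖ(ζ)`. -/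
theorem tensor_interpolant_xi_derivative_eq_mixed_projection_3d
    (N : ℕ) (hN : 1 ≤ N) (ξ : Fin (N + 1) → ℝ)
    (hmono : StrictMono ξ) (hfirst : ξ 0 = -1) (hlast : ξ (Fin.last N) = 1)
    (l : Fin (N + 1) → Polynomial ℝ)
    (hdeg : ∀ i, (l i).natDegree ≤ N)
    (hlag : ∀ i j, (l i).eval (ξ j) = if i = j then 1 else 0)
    (h : Fin N → Polynomial ℝ)
    (hdef : ∀ i : Fin N,
      h i = -∑ j : Fin (N + 1), if (j : ℕ) < (i : ℕ) + 1 then derivative (l j) else 0)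
    (f : ℝ × ℝ × ℝ → ℝ)
    (hf : ContDiffOn ℝ 1 f
      (Set.Icc (-1 : ℝ) 1 ×ˢ Set.Icc (-1 : ℝ) 1 ×ˢ Set.Icc (-1 : ℝ) 1)) :
    ∀ x ∈ Set.Icc (-1 : ℝ) 1, ∀ y ∈ Set.Icc (-1 : ℝ) 1, ∀ z ∈ Set.Icc (-1 : ℝ) 1,
      deriv (fun s => ∑ i : Fin (N + 1), ∑ j : Fin (N + 1), ∑ k : Fin (N + 1),
          f (ξ i, ξ j, ξ k) * (l i).eval s * (l j).eval y * (l k).eval z) x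
        = (∑ i : Fin N, ∑ j : Fin (N + 1), ∑ k : Fin (N + 1),
            (∫ s in (ξ i.castSucc)..(ξ i.succ),
                derivWithin (fun u => f (u, ξ j, ξ k)) (Set.Icc (-1 : ℝ) 1) s)
              * (h i).eval x * (l j).eval y * (l k).eval z) ∧
      deriv (fun s => ∑ i : Fin (N + 1), ∑ j : Fin (N + 1), ∑ k : Fin (N + 1),
          f (ξ i, ξ j, ξ k) * (l i).eval s * (l j).eval y * (l k).eval z) x
        = ∑ i : Fin N, ∑ j : Fin (N + 1), ∑ k : Fin (N + 1),
            (f (ξ i.succ, ξ j, ξ k) - f (ξ i.castSucc, ξ j, ξ k))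
              * (h i).eval x * (l j).eval y * (l k).eval z := by
  intro x hx y hy z hz
  classical
  have hξmem : ∀ i : Fin (N + 1), ξ i ∈ Set.Icc (-1 : ℝ) 1 := by
    intro i
    constructor
    · rw [← hfirst]; exact hmono.monotone (Fin.zero_le i)
    · rw [← hlast]; exact hmono.monotone (Fin.le_last i)
  -- the sum of the Lagrange basis polynomials is 1
  have hl1 : (∑ i : Fin (N + 1), l i) = 1 := by
    have hz0 : ((∑ i : Fin (N + 1), l i) - 1 : ℝ[X]) = 0 := by
      apply Polynomial.eq_zero_of_natDegree_lt_card_of_eval_eq_zero _ hmono.injective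
      · intro j
        simp [Polynomial.eval_finset_sum, hlag]
      · calc ((∑ i : Fin (N + 1), l i) - 1 : ℝ[X]).natDegree
            ≤ max (∑ i : Fin (N + 1), l i).natDegree (1 : ℝ[X]).natDegree :=
              Polynomial.natDegree_sub_le _ _
          _ ≤ N := by
              apply max_le
              · exact (Polynomial.natDegree_sum_le _ _).trans
                  ((Finset.fold_max_le N).2 ⟨Nat.zero_le _, fun i _ => hdeg i⟩)
              · simp
          _ < Fintype.card (Fin (N + 1)) := by simp
    exact sub_eq_zero.mp hz0
  set d : Fin (N + 1) → ℝ := fun i => (derivative (l i)).eval x with hd_def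
  have hdsum : ∑ i, d i = 0 := by
    have h0 : ∑ i : Fin (N + 1), derivative (l i) = 0 := by
      rw [← Polynomial.derivative_sum, hl1]
      simp
    calc ∑ i, d i = (∑ i : Fin (N + 1), derivative (l i)).eval x := by
          rw [Polynomial.eval_finset_sum]
      _ = 0 := by rw [h0]; simp
  have hHx : ∀ i : Fin N,
      (h i).eval x = -(∑ j : Fin (N + 1), if (j : ℕ) < (i : ℕ) + 1 then d j else 0) := by
    intro i
    rw [hdef i]
    simp only [Polynomial.eval_neg, Polynomial.eval_finset_sum]
    congr 1
    exact Finset.sum_congr rfl fun j _ => by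
      by_cases hj : (j : ℕ) < (i : ℕ) + 1 <;> simp [hj, hd_def]
  -- derivative of the interpolant
  have hder : HasDerivAt
      (fun s => ∑ i : Fin (N + 1), ∑ j : Fin (N + 1), ∑ k : Fin (N + 1),
          f (ξ i, ξ j, ξ k) * (l i).eval s * (l j).eval y * (l k).eval z)
      (∑ i : Fin (N + 1), ∑ j : Fin (N + 1), ∑ k : Fin (N + 1),
          f (ξ i, ξ j, ξ k) * d i * (l j).eval y * (l k).eval z) x := by
    apply HasDerivAt.fun_sum; intro i _
    apply HasDerivAt.fun_sum; intro j _
    apply HasDerivAt.fun_sum; intro k _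
    exact ((((l i).hasDerivAt x).const_mul (f (ξ i, ξ j, ξ k))).mul_const
      ((l j).eval y)).mul_const ((l k).eval z)
  have hderiv_eq := hder.deriv
  -- key algebraic identity (the second claim)
  have key : (∑ i : Fin (N + 1), ∑ j : Fin (N + 1), ∑ k : Fin (N + 1),
        f (ξ i, ξ j, ξ k) * d i * (l j).eval y * (l k).eval z)
      = ∑ i : Fin N, ∑ j : Fin (N + 1), ∑ k : Fin (N + 1),
          (f (ξ i.succ, ξ j, ξ k) - f (ξ i.castSucc, ξ j, ξ k))
            * (h i).eval x * (l j).eval y * (l k).eval z := by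
    rw [Finset.sum_comm]
    rw [Finset.sum_comm (γ := Fin N)]
    refine Finset.sum_congr rfl fun j _ => ?_
    rw [Finset.sum_comm]
    rw [Finset.sum_comm (γ := Fin N)]
    refine Finset.sum_congr rfl fun k _ => ?_
    have habel := abel_fin N (fun i => f (ξ i, ξ j, ξ k)) d hdsum
    calc ∑ i : Fin (N + 1), f (ξ i, ξ j, ξ k) * d i * (l j).eval y * (l k).eval z
        = (∑ i : Fin (N + 1), f (ξ i, ξ j, ξ k) * d i) * ((l j).eval y * (l k).eval z) := by
          rw [Finset.sum_mul]; exact Finset.sum_congr rfl fun i _ => by ring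
      _ = (∑ i : Fin N, (f (ξ i.succ, ξ j, ξ k) - f (ξ i.castSucc, ξ j, ξ k))
            * (-(∑ m : Fin (N + 1), if (m : ℕ) < (i : ℕ) + 1 then d m else 0)))
            * ((l j).eval y * (l k).eval z) := by rw [habel]
      _ = ∑ i : Fin N, (f (ξ i.succ, ξ j, ξ k) - f (ξ i.castSucc, ξ j, ξ k))
            * (h i).eval x * (l j).eval y * (l k).eval z := by
          rw [Finset.sum_mul]
          exact Finset.sum_congr rfl fun i _ => by rw [hHx i]; ring
  -- fundamental theorem of calculus for each slice
  have hint : ∀ (i : Fin N) (j k : Fin (N + 1)),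
      (∫ s in (ξ i.castSucc)..(ξ i.succ),
          derivWithin (fun u => f (u, ξ j, ξ k)) (Set.Icc (-1 : ℝ) 1) s)
        = f (ξ i.succ, ξ j, ξ k) - f (ξ i.castSucc, ξ j, ξ k) := by
    intro i j k
    set g : ℝ → ℝ := fun u => f (u, ξ j, ξ k) with hg_def
    have hmaps : Set.MapsTo (fun u : ℝ => (u, ξ j, ξ k)) (Set.Icc (-1 : ℝ) 1)
        (Set.Icc (-1 : ℝ) 1 ×ˢ Set.Icc (-1 : ℝ) 1 ×ˢ Set.Icc (-1 : ℝ) 1) := by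
      intro u hu
      exact ⟨hu, hξmem j, hξmem k⟩
    have hg : ContDiffOn ℝ 1 g (Set.Icc (-1 : ℝ) 1) := by
      apply hf.comp _ hmaps
      exact contDiffOn_id.prodMk (contDiffOn_const.prodMk contDiffOn_const)
    have hab : ξ i.castSucc ≤ ξ i.succ :=
      (hmono (Fin.castSucc_lt_succ (i := i))).le
    have ha : ξ i.castSucc ∈ Set.Icc (-1 : ℝ) 1 := hξmem _
    have hb : ξ i.succ ∈ Set.Icc (-1 : ℝ) 1 := hξmem _
    have hIccsub : Set.Icc (ξ i.castSucc) (ξ i.succ) ⊆ Set.Icc (-1 : ℝ) 1 :=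
      Set.Icc_subset_Icc ha.1 hb.2
    have hud : UniqueDiffOn ℝ (Set.Icc (-1 : ℝ) 1) := uniqueDiffOn_Icc (by norm_num)
    have hg'cont : ContinuousOn (derivWithin g (Set.Icc (-1 : ℝ) 1)) (Set.Icc (-1 : ℝ) 1) :=
      hg.continuousOn_derivWithin hud le_rfl
    show (∫ s in (ξ i.castSucc)..(ξ i.succ),
        derivWithin g (Set.Icc (-1 : ℝ) 1) s) = g (ξ i.succ) - g (ξ i.castSucc)
    apply intervalIntegral.integral_eq_sub_of_hasDeriv_right_of_le hab
    · exact (hg.continuousOn).mono hIccsub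
    · intro s hs
      have hs' : s ∈ Set.Ioo (-1 : ℝ) 1 :=
        ⟨lt_of_le_of_lt ha.1 hs.1, lt_of_lt_of_le hs.2 hb.2⟩
      have hnhds : Set.Icc (-1 : ℝ) 1 ∈ nhds s :=
        Icc_mem_nhds hs'.1 hs'.2
      have hdx : DifferentiableWithinAt ℝ g (Set.Icc (-1 : ℝ) 1) s :=
        (hg.differentiableOn one_ne_zero) s (Set.Ioo_subset_Icc_self hs')
      exact ((hdx.hasDerivWithinAt).hasDerivAt hnhds).hasDerivWithinAt
    · exact (hg'cont.mono (by rwa [Set.uIcc_of_le hab])).intervalIntegrable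
  refine ⟨?_, by rw [hderiv_eq]; exact key⟩
  rw [hderiv_eq, key]
  refine Finset.sum_congr rfl fun i _ => Finset.sum_congr rfl fun j _ =>
    Finset.sum_congr rfl fun k _ => ?_
  rw [hint i j k]
end

section
/- The three-dimensional curl diagram commutes (options 'red' and 'blue' coincide): for every continuously differentiable vector field F = (F₁, F₂, F₃) on [−1,1]³, one has p³(curl F) = curl(p² F), i.e. for each component n = 1, 2, 3, the mixed projection p³ₙ applied to (curl F)ₙ equals the n-th component of the curl of the componentwise mixed projection p²F. Here, for example, the first components are p³₁(g)(ξ,η,ζ) = ∑_{i=0}^N ∑_{j=1}^N ∑_{k=1}^N (∫_{ξ_{j−1}}^{ξ_j} ∫_{ξ_{k−1}}^{ξ_k} g(ξ_i, s, t) dt ds) l_i(ξ) h_j(η) h_k(ζ) and p²₁(F₁)(ξ,η,ζ) = ∑_{i=1}^N ∑_{j=0}^N ∑_{k=0}^N (∫_{ξ_{i−1}}^{ξ_i} F₁(s, ξ_j, ξ_k) ds) h_i(ξ) l_j(η) l_k(ζ), with the other components of p² and p³ defined by the analogous tensor products in which histopolation (edge basis h) is used in the directions indicated by the de Rham spaces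 V₂ and V₃ and interpolation (Lagrange basis l) in the remaining directions. -/
open Polynomial MeasureTheory

/-- Partial derivative (within the cube `[-1,1]³`, i.e. one-sided at the boundary) of
`f : ℝ³ → ℝ` in direction `d`. -/
noncomputable def pdOn (d : Fin 3) (f : (Fin 3 → ℝ) → ℝ) (y : Fin 3 → ℝ) : ℝ :=
  derivWithin (fun s => f (Function.update y d s)) (Set.Icc (-1 : ℝ) 1) (y d)

/-- Curl (on the cube) of a vector field `F : ℝ³ → ℝ³`:
`curl F = (∂₂F₃ - ∂₃F₂, ∂₃F₁ - ∂₁F₃, ∂₁F₂ - ∂₂F₁)`. -/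
noncomputable def curlOn (F : (Fin 3 → ℝ) → (Fin 3 → ℝ)) (y : Fin 3 → ℝ) : Fin 3 → ℝ :=
  ![pdOn 1 (fun z => F z 2) y - pdOn 2 (fun z => F z 1) y,
    pdOn 2 (fun z => F z 0) y - pdOn 0 (fun z => F z 2) y,
    pdOn 0 (fun z => F z 1) y - pdOn 1 (fun z => F z 0) y]

/-- The componentwise tensor-product projection `p²` (histopolation in direction 1 for
component 1, direction 2 for component 2, direction 3 for component 3; Lagrange
interpolation in the remaining directions). -/
noncomputable def P2 {N : ℕ} (ξ : Fin (N + 1) → ℝ) (l : Fin (N + 1) → Polynomial ℝ)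
    (h : Fin N → Polynomial ℝ) (F : (Fin 3 → ℝ) → (Fin 3 → ℝ)) (y : Fin 3 → ℝ) :
    Fin 3 → ℝ :=
  ![∑ i : Fin N, ∑ j : Fin (N + 1), ∑ k : Fin (N + 1),
      (∫ s in (ξ i.castSucc)..(ξ i.succ), F ![s, ξ j, ξ k] 0)
        * (h i).eval (y 0) * (l j).eval (y 1) * (l k).eval (y 2),
    ∑ i : Fin (N + 1), ∑ j : Fin N, ∑ k : Fin (N + 1),
      (∫ s in (ξ j.castSucc)..(ξ j.succ), F ![ξ i, s, ξ k] 1)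
        * (l i).eval (y 0) * (h j).eval (y 1) * (l k).eval (y 2),
    ∑ i : Fin (N + 1), ∑ j : Fin (N + 1), ∑ k : Fin N,
      (∫ s in (ξ k.castSucc)..(ξ k.succ), F ![ξ i, ξ j, s] 2)
        * (l i).eval (y 0) * (l j).eval (y 1) * (h k).eval (y 2)]

/-- The componentwise tensor-product projection `p³` (Lagrange interpolation in direction 1
for component 1, direction 2 for component 2, direction 3 for component 3; histopolation,
i.e. sub-interval integrals with the edge basis, in the remaining two directions). -/
noncomputable def P3 {N : ℕ} (ξ : Fin (N + 1) → ℝ) (l : Fin (N + 1) → Polynomial ℝ)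
    (h : Fin N → Polynomial ℝ) (G : (Fin 3 → ℝ) → (Fin 3 → ℝ)) (y : Fin 3 → ℝ) :
    Fin 3 → ℝ :=
  ![∑ i : Fin (N + 1), ∑ j : Fin N, ∑ k : Fin N,
      (∫ s in (ξ j.castSucc)..(ξ j.succ), ∫ t in (ξ k.castSucc)..(ξ k.succ), G ![ξ i, s, t] 0)
        * (l i).eval (y 0) * (h j).eval (y 1) * (h k).eval (y 2),
    ∑ i : Fin N, ∑ j : Fin (N + 1), ∑ k : Fin N,
      (∫ s in (ξ i.castSucc)..(ξ i.succ), ∫ t in (ξ k.castSucc)..(ξ k.succ), G ![s, ξ j, t] 1)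
        * (h i).eval (y 0) * (l j).eval (y 1) * (h k).eval (y 2),
    ∑ i : Fin N, ∑ j : Fin N, ∑ k : Fin (N + 1),
      (∫ s in (ξ i.castSucc)..(ξ i.succ), ∫ t in (ξ j.castSucc)..(ξ j.succ), G ![s, t, ξ k] 2)
        * (h i).eval (y 0) * (h j).eval (y 1) * (l k).eval (y 2)]

namespace CurlAux3

lemma cube_pi : (Set.Icc (-1 : Fin 3 → ℝ) 1) = Set.pi Set.univ (fun _ => Set.Icc (-1:ℝ) 1) := by
  rw [Set.pi_univ_Icc]; rfl

lemma uniqueDiffOn_cube : UniqueDiffOn ℝ (Set.Icc (-1 : Fin 3 → ℝ) 1) := by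
  rw [cube_pi]
  exact UniqueDiffOn.univ_pi (fun _ => uniqueDiffOn_Icc (by norm_num))

lemma mem_cube {y : Fin 3 → ℝ} (hy : y ∈ Set.Icc (-1 : Fin 3 → ℝ) 1) (i : Fin 3) :
    y i ∈ Set.Icc (-1:ℝ) 1 := ⟨hy.1 i, hy.2 i⟩

lemma update_mem_cube {y : Fin 3 → ℝ} (hy : y ∈ Set.Icc (-1 : Fin 3 → ℝ) 1) (d : Fin 3)
    {s : ℝ} (hs : s ∈ Set.Icc (-1:ℝ) 1) :
    Function.update y d s ∈ Set.Icc (-1 : Fin 3 → ℝ) 1 := by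
  have key : ∀ i, Function.update y d s i ∈ Set.Icc (-1:ℝ) 1 := by
    intro i
    rcases eq_or_ne i d with rfl | hne
    · simpa using hs
    · simpa [Function.update_of_ne hne] using ⟨hy.1 i, hy.2 i⟩
  exact ⟨fun i => (key i).1, fun i => (key i).2⟩

lemma contDiff_update (y : Fin 3 → ℝ) (d : Fin 3) :
    ContDiff ℝ 1 (fun s : ℝ => Function.update y d s) := by
  rw [contDiff_pi]
  intro e
  rcases eq_or_ne e d with rfl | hne
  · simpa [Function.update_apply] using (by exact contDiff_id : ContDiff ℝ 1 (fun x : ℝ => x))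
  · simpa [Function.update_apply, hne] using contDiff_const

lemma contDiffOn_slice {F : (Fin 3 → ℝ) → (Fin 3 → ℝ)}
    (hF : ContDiffOn ℝ 1 F (Set.Icc (-1 : Fin 3 → ℝ) 1)) (d c : Fin 3)
    {y : Fin 3 → ℝ} (hy : y ∈ Set.Icc (-1 : Fin 3 → ℝ) 1) :
    ContDiffOn ℝ 1 (fun s => F (Function.update y d s) c) (Set.Icc (-1:ℝ) 1) := by
  have h1 : ContDiffOn ℝ 1 (fun s : ℝ => F (Function.update y d s)) (Set.Icc (-1:ℝ) 1) :=
    hF.comp (contDiff_update y d).contDiffOn (fun s hs => update_mem_cube hy d hs)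
  exact ((ContinuousLinearMap.proj c : ((Fin 3) → ℝ) →L[ℝ] ℝ).contDiff).comp_contDiffOn h1


lemma tele (D : ℕ → ℝ) (m n : ℕ) (hmn : m ≤ n) :
    ∑ k ∈ Finset.range n, (if m ≤ k then D (k+1) - D k else 0) = D n - D m := by
  induction n with
  | zero => interval_cases m; simp
  | succ n ih =>
    rw [Finset.sum_range_succ]
    rcases le_or_gt m n with hle | hlt
    · rw [ih hle, if_pos hle]; ring
    · have hm : m = n + 1 := le_antisymm hmn hlt
      subst hm
      rw [if_neg (by omega)]
      rw [Finset.sum_eq_zero (fun k hk => by rw [if_neg (by simp at hk; omega)])]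
      ring

variable {N : ℕ}

lemma sum_deriv_l_eq_zero (hN : 1 ≤ N) (ξ : Fin (N + 1) → ℝ) (hmono : StrictMono ξ)
    (l : Fin (N + 1) → Polynomial ℝ) (hdeg : ∀ i, (l i).natDegree ≤ N)
    (hlag : ∀ i j, (l i).eval (ξ j) = if i = j then 1 else 0) :
    ∑ j : Fin (N+1), derivative (l j) = 0 := by
  have hsum : ∑ j : Fin (N+1), l j = Polynomial.C (1:ℝ) := by
    have hz : (∑ j : Fin (N+1), l j) - Polynomial.C 1 = 0 := by
      apply Polynomial.eq_zero_of_natDegree_lt_card_of_eval_eq_zero _ hmono.injective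
      · intro i
        simp [Polynomial.eval_finset_sum, hlag]
      · have h1 : ((∑ j : Fin (N+1), l j) - Polynomial.C 1).natDegree ≤ N := by
          apply le_trans (Polynomial.natDegree_sub_le _ _)
          simp only [Polynomial.natDegree_C, max_le_iff]
          exact ⟨Polynomial.natDegree_sum_le_of_forall_le _ _ (fun i _ => hdeg i), Nat.zero_le N⟩
        calc ((∑ j : Fin (N+1), l j) - Polynomial.C 1).natDegree ≤ N := h1
          _ < N + 1 := Nat.lt_succ_self N
          _ = Fintype.card (Fin (N+1)) := (Fintype.card_fin _).symm
    linear_combination hz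
  calc ∑ j : Fin (N+1), derivative (l j) = derivative (∑ j : Fin (N+1), l j) := by
        rw [map_sum]
    _ = 0 := by rw [hsum]; simp

lemma abel_scalar (l : Fin (N + 1) → Polynomial ℝ) (h : Fin N → Polynomial ℝ)
    (hdef : ∀ i : Fin N,
      h i = -∑ j : Fin (N + 1), if (j : ℕ) < (i : ℕ) + 1 then derivative (l j) else 0)
    (hderivsum : ∑ j : Fin (N+1), derivative (l j) = 0)
    (C : Fin (N+1) → ℝ) (x : ℝ) :
    ∑ j : Fin (N+1), C j * (derivative (l j)).eval x
      = ∑ k : Fin N, (C k.succ - C k.castSucc) * (h k).eval x := by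
  have heval : ∀ k : Fin N, (h k).eval x
      = -∑ j : Fin (N+1), (if (j:ℕ) < (k:ℕ)+1 then (derivative (l j)).eval x else 0) := by
    intro k
    rw [hdef k]
    simp [Polynomial.eval_finset_sum, apply_ite (Polynomial.eval x)]
  have hsumzero : ∑ j : Fin (N+1), (derivative (l j)).eval x = 0 := by
    have := congrArg (Polynomial.eval x) hderivsum
    simpa [Polynomial.eval_finset_sum] using this
  set Cn : ℕ → ℝ := fun n => C ⟨min n N, Nat.lt_succ_of_le (min_le_right n N)⟩ with hCn
  have hCsucc : ∀ k : Fin N, C k.succ = Cn ((k:ℕ)+1) := by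
    intro k
    simp only [hCn]
    congr 1
    exact Fin.ext (by simp [Nat.min_eq_left (Nat.succ_le_of_lt k.isLt)])
  have hCcast : ∀ k : Fin N, C k.castSucc = Cn (k:ℕ) := by
    intro k
    simp only [hCn]
    congr 1
    exact Fin.ext (by simp [Nat.min_eq_left (le_of_lt k.isLt)])
  have hClast : C (Fin.last N) = Cn N := by
    simp only [hCn]; congr 1; exact Fin.ext (by simp)
  have hCj : ∀ j : Fin (N+1), C j = Cn (j:ℕ) := by
    intro j
    simp only [hCn]; congr 1
    exact Fin.ext (by simp [Nat.min_eq_left (Nat.lt_succ_iff.mp j.isLt)])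
  have htel : ∀ j : Fin (N+1),
      (∑ k : Fin N, if (j:ℕ) < (k:ℕ)+1 then C k.succ - C k.castSucc else 0)
        = C (Fin.last N) - C j := by
    intro j
    have step1 : (∑ k : Fin N, if (j:ℕ) < (k:ℕ)+1 then C k.succ - C k.castSucc else 0)
        = ∑ k : Fin N, (fun n : ℕ => if (j:ℕ) ≤ n then Cn (n+1) - Cn n else 0) (k:ℕ) := by
      apply Finset.sum_congr rfl
      intro k _
      simp only [Nat.lt_succ_iff, hCsucc k, hCcast k]
    rw [step1, Fin.sum_univ_eq_sum_range (fun n : ℕ => if (j:ℕ) ≤ n then Cn (n+1) - Cn n else 0) N,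
      tele Cn (j:ℕ) N (Nat.lt_succ_iff.mp j.isLt), hClast, hCj j]
  symm
  calc ∑ k : Fin N, (C k.succ - C k.castSucc) * (h k).eval x
      = ∑ k : Fin N, ∑ j : Fin (N+1),
          -(if (j:ℕ) < (k:ℕ)+1 then (C k.succ - C k.castSucc) * (derivative (l j)).eval x else 0) := by
        apply Finset.sum_congr rfl
        intro k _
        rw [heval k, mul_neg, Finset.mul_sum, ← Finset.sum_neg_distrib]
        apply Finset.sum_congr rfl
        intro j _
        congr 1
        rw [mul_ite, mul_zero]
    _ = ∑ j : Fin (N+1), ∑ k : Fin N,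
          -(if (j:ℕ) < (k:ℕ)+1 then (C k.succ - C k.castSucc) * (derivative (l j)).eval x else 0) :=
        Finset.sum_comm
    _ = ∑ j : Fin (N+1), -((C (Fin.last N) - C j) * (derivative (l j)).eval x) := by
        apply Finset.sum_congr rfl
        intro j _
        rw [Finset.sum_neg_distrib, ← htel j, Finset.sum_mul]
        congr 1
        apply Finset.sum_congr rfl
        intro k _
        rw [ite_mul, zero_mul]
    _ = (∑ j : Fin (N+1), C j * (derivative (l j)).eval x)
          - C (Fin.last N) * ∑ j : Fin (N+1), (derivative (l j)).eval x := by
        rw [Finset.mul_sum, ← Finset.sum_sub_distrib]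
        apply Finset.sum_congr rfl
        intro j _
        ring
    _ = ∑ j : Fin (N+1), C j * (derivative (l j)).eval x := by
        rw [hsumzero, mul_zero, sub_zero]

variable {N : ℕ}

section Abel3

variable (l : Fin (N + 1) → Polynomial ℝ) (h : Fin N → Polynomial ℝ)
    (hdef : ∀ i : Fin N,
      h i = -∑ j : Fin (N + 1), if (j : ℕ) < (i : ℕ) + 1 then derivative (l j) else 0)
    (hderivsum : ∑ j : Fin (N+1), derivative (l j) = 0)

include hdef hderivsum

lemma abel3_last {ι κ : Type*} [Fintype ι] [Fintype κ]
    (B : ι → κ → Fin (N+1) → ℝ) (u : ι → ℝ) (v : κ → ℝ) (x : ℝ) :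
    ∑ i : ι, ∑ j : κ, ∑ k : Fin (N+1), B i j k * u i * v j * (derivative (l k)).eval x
      = ∑ i : ι, ∑ j : κ, ∑ k : Fin N,
          (B i j k.succ - B i j k.castSucc) * u i * v j * (h k).eval x := by
  apply Finset.sum_congr rfl; intro i _
  apply Finset.sum_congr rfl; intro j _
  calc ∑ k : Fin (N+1), B i j k * u i * v j * (derivative (l k)).eval x
      = ∑ k : Fin N, (B i j k.succ * u i * v j - B i j k.castSucc * u i * v j) * (h k).eval x :=
        abel_scalar l h hdef hderivsum (fun k => B i j k * u i * v j) x
    _ = ∑ k : Fin N, (B i j k.succ - B i j k.castSucc) * u i * v j * (h k).eval x := by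
        apply Finset.sum_congr rfl; intro k _; ring

lemma abel3_mid {ι κ : Type*} [Fintype ι] [Fintype κ]
    (B : ι → Fin (N+1) → κ → ℝ) (u : ι → ℝ) (w : κ → ℝ) (x : ℝ) :
    ∑ i : ι, ∑ j : Fin (N+1), ∑ k : κ, B i j k * u i * (derivative (l j)).eval x * w k
      = ∑ i : ι, ∑ j : Fin N, ∑ k : κ,
          (B i j.succ k - B i j.castSucc k) * u i * (h j).eval x * w k := by
  apply Finset.sum_congr rfl; intro i _
  rw [Finset.sum_comm]
  conv_rhs => rw [Finset.sum_comm]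
  apply Finset.sum_congr rfl; intro k _
  calc ∑ j : Fin (N+1), B i j k * u i * (derivative (l j)).eval x * w k
      = ∑ j : Fin (N+1), (B i j k * u i * w k) * (derivative (l j)).eval x := by
        apply Finset.sum_congr rfl; intro j _; ring
    _ = ∑ j : Fin N, (B i j.succ k * u i * w k - B i j.castSucc k * u i * w k) * (h j).eval x :=
        abel_scalar l h hdef hderivsum (fun j => B i j k * u i * w k) x
    _ = ∑ j : Fin N, (B i j.succ k - B i j.castSucc k) * u i * (h j).eval x * w k := by
        apply Finset.sum_congr rfl; intro j _; ring

lemma abel3_first {ι κ : Type*} [Fintype ι] [Fintype κ]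
    (B : Fin (N+1) → ι → κ → ℝ) (v : ι → ℝ) (w : κ → ℝ) (x : ℝ) :
    ∑ i : Fin (N+1), ∑ j : ι, ∑ k : κ, B i j k * (derivative (l i)).eval x * v j * w k
      = ∑ i : Fin N, ∑ j : ι, ∑ k : κ,
          (B i.succ j k - B i.castSucc j k) * (h i).eval x * v j * w k := by
  rw [Finset.sum_comm]
  conv_rhs => rw [Finset.sum_comm]
  apply Finset.sum_congr rfl; intro j _
  rw [Finset.sum_comm]
  conv_rhs => rw [Finset.sum_comm]
  apply Finset.sum_congr rfl; intro k _
  calc ∑ i : Fin (N+1), B i j k * (derivative (l i)).eval x * v j * w k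
      = ∑ i : Fin (N+1), (B i j k * v j * w k) * (derivative (l i)).eval x := by
        apply Finset.sum_congr rfl; intro i _; ring
    _ = ∑ i : Fin N, (B i.succ j k * v j * w k - B i.castSucc j k * v j * w k) * (h i).eval x :=
        abel_scalar l h hdef hderivsum (fun i => B i j k * v j * w k) x
    _ = ∑ i : Fin N, (B i.succ j k - B i.castSucc j k) * (h i).eval x * v j * w k := by
        apply Finset.sum_congr rfl; intro i _; ring

end Abel3

section PdOnSum

lemma pdOn0_sum3 {ι κ μ : Type*} [Fintype ι] [Fintype κ] [Fintype μ]
    (c : ι → κ → μ → ℝ) (p : ι → Polynomial ℝ) (q : κ → Polynomial ℝ) (r : μ → Polynomial ℝ)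
    {y : Fin 3 → ℝ} (hy : y ∈ Set.Icc (-1 : Fin 3 → ℝ) 1) :
    pdOn 0 (fun z => ∑ i : ι, ∑ j : κ, ∑ k : μ,
        c i j k * (p i).eval (z 0) * (q j).eval (z 1) * (r k).eval (z 2)) y
      = ∑ i : ι, ∑ j : κ, ∑ k : μ,
          c i j k * (derivative (p i)).eval (y 0) * (q j).eval (y 1) * (r k).eval (y 2) := by
  unfold pdOn
  have e1 : ∀ s : ℝ, Function.update y 0 s 1 = y 1 :=
    fun s => Function.update_of_ne (by decide) _ _
  have e2 : ∀ s : ℝ, Function.update y 0 s 2 = y 2 :=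
    fun s => Function.update_of_ne (by decide) _ _
  simp only [e1, e2, Function.update_self]
  have hder : HasDerivAt (fun s : ℝ => ∑ i : ι, ∑ j : κ, ∑ k : μ,
      c i j k * (p i).eval s * (q j).eval (y 1) * (r k).eval (y 2))
      (∑ i : ι, ∑ j : κ, ∑ k : μ,
        c i j k * (derivative (p i)).eval (y 0) * (q j).eval (y 1) * (r k).eval (y 2)) (y 0) := by
    apply HasDerivAt.fun_sum; intro i _
    apply HasDerivAt.fun_sum; intro j _
    apply HasDerivAt.fun_sum; intro k _
    exact ((((p i).hasDerivAt (y 0)).const_mul (c i j k)).mul_const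
      ((q j).eval (y 1))).mul_const ((r k).eval (y 2))
  exact hder.hasDerivWithinAt.derivWithin (uniqueDiffOn_Icc (by norm_num) _ ⟨hy.1 0, hy.2 0⟩)

lemma pdOn1_sum3 {ι κ μ : Type*} [Fintype ι] [Fintype κ] [Fintype μ]
    (c : ι → κ → μ → ℝ) (p : ι → Polynomial ℝ) (q : κ → Polynomial ℝ) (r : μ → Polynomial ℝ)
    {y : Fin 3 → ℝ} (hy : y ∈ Set.Icc (-1 : Fin 3 → ℝ) 1) :
    pdOn 1 (fun z => ∑ i : ι, ∑ j : κ, ∑ k : μ,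
        c i j k * (p i).eval (z 0) * (q j).eval (z 1) * (r k).eval (z 2)) y
      = ∑ i : ι, ∑ j : κ, ∑ k : μ,
          c i j k * (p i).eval (y 0) * (derivative (q j)).eval (y 1) * (r k).eval (y 2) := by
  unfold pdOn
  have e1 : ∀ s : ℝ, Function.update y 1 s 0 = y 0 :=
    fun s => Function.update_of_ne (by decide) _ _
  have e2 : ∀ s : ℝ, Function.update y 1 s 2 = y 2 :=
    fun s => Function.update_of_ne (by decide) _ _
  simp only [e1, e2, Function.update_self]
  have hder : HasDerivAt (fun s : ℝ => ∑ i : ι, ∑ j : κ, ∑ k : μ,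
      c i j k * (p i).eval (y 0) * (q j).eval s * (r k).eval (y 2))
      (∑ i : ι, ∑ j : κ, ∑ k : μ,
        c i j k * (p i).eval (y 0) * (derivative (q j)).eval (y 1) * (r k).eval (y 2)) (y 1) := by
    apply HasDerivAt.fun_sum; intro i _
    apply HasDerivAt.fun_sum; intro j _
    apply HasDerivAt.fun_sum; intro k _
    exact (((q j).hasDerivAt (y 1)).const_mul (c i j k * (p i).eval (y 0))).mul_const
      ((r k).eval (y 2))
  exact hder.hasDerivWithinAt.derivWithin (uniqueDiffOn_Icc (by norm_num) _ ⟨hy.1 1, hy.2 1⟩)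

lemma pdOn2_sum3 {ι κ μ : Type*} [Fintype ι] [Fintype κ] [Fintype μ]
    (c : ι → κ → μ → ℝ) (p : ι → Polynomial ℝ) (q : κ → Polynomial ℝ) (r : μ → Polynomial ℝ)
    {y : Fin 3 → ℝ} (hy : y ∈ Set.Icc (-1 : Fin 3 → ℝ) 1) :
    pdOn 2 (fun z => ∑ i : ι, ∑ j : κ, ∑ k : μ,
        c i j k * (p i).eval (z 0) * (q j).eval (z 1) * (r k).eval (z 2)) y
      = ∑ i : ι, ∑ j : κ, ∑ k : μ,
          c i j k * (p i).eval (y 0) * (q j).eval (y 1) * (derivative (r k)).eval (y 2) := by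
  unfold pdOn
  have e1 : ∀ s : ℝ, Function.update y 2 s 0 = y 0 :=
    fun s => Function.update_of_ne (by decide) _ _
  have e2 : ∀ s : ℝ, Function.update y 2 s 1 = y 1 :=
    fun s => Function.update_of_ne (by decide) _ _
  simp only [e1, e2, Function.update_self]
  have hder : HasDerivAt (fun s : ℝ => ∑ i : ι, ∑ j : κ, ∑ k : μ,
      c i j k * (p i).eval (y 0) * (q j).eval (y 1) * (r k).eval s)
      (∑ i : ι, ∑ j : κ, ∑ k : μ,
        c i j k * (p i).eval (y 0) * (q j).eval (y 1) * (derivative (r k)).eval (y 2)) (y 2) := by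
    apply HasDerivAt.fun_sum; intro i _
    apply HasDerivAt.fun_sum; intro j _
    apply HasDerivAt.fun_sum; intro k _
    exact ((r k).hasDerivAt (y 2)).const_mul (c i j k * (p i).eval (y 0) * (q j).eval (y 1))
  exact hder.hasDerivWithinAt.derivWithin (uniqueDiffOn_Icc (by norm_num) _ ⟨hy.1 2, hy.2 2⟩)

end PdOnSum

lemma ftc {F : (Fin 3 → ℝ) → (Fin 3 → ℝ)}
    (hF : ContDiffOn ℝ 1 F (Set.Icc (-1 : Fin 3 → ℝ) 1)) (d c : Fin 3)
    {y : Fin 3 → ℝ} (hy : y ∈ Set.Icc (-1 : Fin 3 → ℝ) 1)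
    {a b : ℝ} (ha : a ∈ Set.Icc (-1:ℝ) 1) (hb : b ∈ Set.Icc (-1:ℝ) 1) (hab : a ≤ b) :
    ∫ s in a..b, pdOn d (fun z => F z c) (Function.update y d s)
      = F (Function.update y d b) c - F (Function.update y d a) c := by
  set g : ℝ → ℝ := fun s => F (Function.update y d s) c with hg_def
  have hg : ContDiffOn ℝ 1 g (Set.Icc (-1:ℝ) 1) := contDiffOn_slice hF d c hy
  have hpd : ∀ s : ℝ, pdOn d (fun z => F z c) (Function.update y d s)
      = derivWithin g (Set.Icc (-1:ℝ) 1) s := by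
    intro s
    unfold pdOn
    simp only [Function.update_idem, Function.update_self]
    rfl
  have hicc : Set.Icc a b ⊆ Set.Icc (-1:ℝ) 1 := Set.Icc_subset_Icc ha.1 hb.2
  calc ∫ s in a..b, pdOn d (fun z => F z c) (Function.update y d s)
      = ∫ s in a..b, derivWithin g (Set.Icc (-1:ℝ) 1) s :=
        intervalIntegral.integral_congr (fun s _ => hpd s)
    _ = g b - g a := by
        apply intervalIntegral.integral_eq_sub_of_hasDeriv_right_of_le hab
        · exact hg.continuousOn.mono hicc
        · intro x hx
          have hx1 : x ∈ Set.Ioo (-1:ℝ) 1 := ⟨lt_of_le_of_lt ha.1 hx.1, lt_of_lt_of_le hx.2 hb.2⟩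
          have hmem : Set.Icc (-1:ℝ) 1 ∈ nhds x := Icc_mem_nhds hx1.1 hx1.2
          have hdiff : DifferentiableWithinAt ℝ g (Set.Icc (-1:ℝ) 1) x :=
            (hg.differentiableOn one_ne_zero) x ⟨hx1.1.le, hx1.2.le⟩
          exact ((hdiff.hasDerivWithinAt).hasDerivAt hmem).hasDerivWithinAt
        · apply ContinuousOn.intervalIntegrable
          rw [Set.uIcc_of_le hab]
          exact (hg.continuousOn_derivWithin (uniqueDiffOn_Icc (by norm_num)) le_rfl).mono hicc

lemma pdOn_eq_fderivWithin {F : (Fin 3 → ℝ) → (Fin 3 → ℝ)}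
    (hF : ContDiffOn ℝ 1 F (Set.Icc (-1 : Fin 3 → ℝ) 1)) (d c : Fin 3)
    {z : Fin 3 → ℝ} (hz : z ∈ Set.Icc (-1 : Fin 3 → ℝ) 1) :
    pdOn d (fun w => F w c) z
      = fderivWithin ℝ F (Set.Icc (-1 : Fin 3 → ℝ) 1) z (Pi.single d 1) c := by
  have hFd : HasFDerivWithinAt F (fderivWithin ℝ F (Set.Icc (-1 : Fin 3 → ℝ) 1) z)
      (Set.Icc (-1 : Fin 3 → ℝ) 1) z :=
    ((hF.differentiableOn one_ne_zero) z hz).hasFDerivWithinAt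
  have hupd : HasDerivWithinAt (fun s : ℝ => Function.update z d s) (Pi.single d 1)
      (Set.Icc (-1:ℝ) 1) (z d) := (hasDerivAt_update z d (z d)).hasDerivWithinAt
  have hmaps : Set.MapsTo (fun s : ℝ => Function.update z d s) (Set.Icc (-1:ℝ) 1)
      (Set.Icc (-1 : Fin 3 → ℝ) 1) := fun s hs => update_mem_cube hz d hs
  have hFz : Function.update z d (z d) = z := Function.update_eq_self d z
  rw [← hFz] at hFd
  have hcomp := hFd.comp_hasDerivWithinAt (z d) hupd hmaps
  have hcoord := (ContinuousLinearMap.proj (R := ℝ) (φ := fun _ : Fin 3 => ℝ) c).hasFDerivAt.comp_hasDerivWithinAt (z d) hcomp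
  have h2 := hcoord.derivWithin (uniqueDiffOn_Icc (by norm_num : (-1:ℝ) < 1) _ (mem_cube hz d))
  rw [hFz] at h2
  unfold pdOn
  exact h2

lemma continuousOn_pdOn {F : (Fin 3 → ℝ) → (Fin 3 → ℝ)}
    (hF : ContDiffOn ℝ 1 F (Set.Icc (-1 : Fin 3 → ℝ) 1)) (d c : Fin 3) :
    ContinuousOn (fun z => pdOn d (fun w => F w c) z) (Set.Icc (-1 : Fin 3 → ℝ) 1) := by
  have h1 : ContinuousOn (fderivWithin ℝ F (Set.Icc (-1 : Fin 3 → ℝ) 1))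
      (Set.Icc (-1 : Fin 3 → ℝ) 1) :=
    hF.continuousOn_fderivWithin uniqueDiffOn_cube le_rfl
  have h2 : ContinuousOn
      (fun z => fderivWithin ℝ F (Set.Icc (-1 : Fin 3 → ℝ) 1) z (Pi.single d 1) c)
      (Set.Icc (-1 : Fin 3 → ℝ) 1) := by
    have hc : Continuous (fun L : (Fin 3 → ℝ) →L[ℝ] (Fin 3 → ℝ) => L (Pi.single d 1) c) := by
      exact (continuous_apply c).comp
        (ContinuousLinearMap.apply ℝ (Fin 3 → ℝ) (Pi.single d 1)).continuous
    exact hc.comp_continuousOn h1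
  exact h2.congr (fun z hz => pdOn_eq_fderivWithin hF d c hz)


lemma integrable_uncurry (f : ℝ → ℝ → ℝ) {a b c d : ℝ} (hab : a ≤ b) (hcd : c ≤ d)
    (hf : ContinuousOn (fun p : ℝ × ℝ => f p.1 p.2) (Set.Icc a b ×ˢ Set.Icc c d)) :
    Integrable (Function.uncurry f)
      ((volume.restrict (Set.Ioc a b)).prod (volume.restrict (Set.Ioc c d))) := by
  rw [Measure.prod_restrict]
  have hint : IntegrableOn (Function.uncurry f) (Set.Icc a b ×ˢ Set.Icc c d) volume :=
    hf.integrableOn_compact (isCompact_Icc.prod isCompact_Icc)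
  exact hint.mono_set (Set.prod_mono Set.Ioc_subset_Icc_self Set.Ioc_subset_Icc_self)

lemma double_swap (f : ℝ → ℝ → ℝ) {a b c d : ℝ} (hab : a ≤ b) (hcd : c ≤ d)
    (hf : ContinuousOn (fun p : ℝ × ℝ => f p.1 p.2) (Set.Icc a b ×ˢ Set.Icc c d)) :
    ∫ s in a..b, ∫ t in c..d, f s t = ∫ t in c..d, ∫ s in a..b, f s t := by
  simp only [intervalIntegral.integral_of_le hab, intervalIntegral.integral_of_le hcd]
  exact integral_integral_swap (integrable_uncurry f hab hcd hf)

lemma double_sub (f g : ℝ → ℝ → ℝ) {a b c d : ℝ} (hab : a ≤ b) (hcd : c ≤ d)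
    (hf : ContinuousOn (fun p : ℝ × ℝ => f p.1 p.2) (Set.Icc a b ×ˢ Set.Icc c d))
    (hg : ContinuousOn (fun p : ℝ × ℝ => g p.1 p.2) (Set.Icc a b ×ˢ Set.Icc c d)) :
    ∫ s in a..b, ∫ t in c..d, (f s t - g s t)
      = (∫ s in a..b, ∫ t in c..d, f s t) - ∫ s in a..b, ∫ t in c..d, g s t := by
  simp only [intervalIntegral.integral_of_le hab, intervalIntegral.integral_of_le hcd]
  have hf' := integrable_uncurry f hab hcd hf
  have hg' := integrable_uncurry g hab hcd hg
  have hfg' : Integrable (Function.uncurry (fun s t => f s t - g s t))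
      ((volume.restrict (Set.Ioc a b)).prod (volume.restrict (Set.Ioc c d))) := hf'.sub hg'
  rw [integral_integral hfg', integral_integral hf', integral_integral hg']
  exact integral_sub hf' hg'


lemma vec_mem_cube {x y z : ℝ} (hx : x ∈ Set.Icc (-1:ℝ) 1) (hy : y ∈ Set.Icc (-1:ℝ) 1)
    (hz : z ∈ Set.Icc (-1:ℝ) 1) : ![x,y,z] ∈ Set.Icc (-1 : Fin 3 → ℝ) 1 := by
  refine ⟨fun e => ?_, fun e => ?_⟩ <;> fin_cases e <;>
    simp [hx.1, hx.2, hy.1, hy.2, hz.1, hz.2]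

lemma upd0 (a b c s : ℝ) : Function.update ![a,b,c] 0 s = ![s,b,c] := by
  funext e; fin_cases e <;> simp [Function.update]
lemma upd1 (a b c s : ℝ) : Function.update ![a,b,c] 1 s = ![a,s,c] := by
  funext e; fin_cases e <;> simp [Function.update]
lemma upd2 (a b c s : ℝ) : Function.update ![a,b,c] 2 s = ![a,b,s] := by
  funext e; fin_cases e <;> simp [Function.update]

lemma cont_pair0 (a : ℝ) : Continuous (fun p : ℝ × ℝ => ![a, p.1, p.2]) := by
  apply continuous_pi; intro e; fin_cases e
  · simpa using continuous_const
  · simpa using continuous_fst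
  · simpa using continuous_snd

lemma cont_pair1 (a : ℝ) : Continuous (fun p : ℝ × ℝ => ![p.1, a, p.2]) := by
  apply continuous_pi; intro e; fin_cases e
  · simpa using continuous_fst
  · simpa using continuous_const
  · simpa using continuous_snd

lemma cont_pair2 (a : ℝ) : Continuous (fun p : ℝ × ℝ => ![p.1, p.2, a]) := by
  apply continuous_pi; intro e; fin_cases e
  · simpa using continuous_fst
  · simpa using continuous_snd
  · simpa using continuous_const

lemma cont_line0 (b c : ℝ) : Continuous (fun t : ℝ => ![t, b, c]) := by
  apply continuous_pi; intro e; fin_cases e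
  · simpa using continuous_id'
  · simpa using continuous_const
  · simpa using continuous_const

lemma cont_line1 (b c : ℝ) : Continuous (fun t : ℝ => ![b, t, c]) := by
  apply continuous_pi; intro e; fin_cases e
  · simpa using continuous_const
  · simpa using continuous_id'
  · simpa using continuous_const

lemma cont_line2 (b c : ℝ) : Continuous (fun t : ℝ => ![b, c, t]) := by
  apply continuous_pi; intro e; fin_cases e
  · simpa using continuous_const
  · simpa using continuous_const
  · simpa using continuous_id'

lemma uIcc_sub {u v : ℝ} (hu : u ∈ Set.Icc (-1:ℝ) 1) (hv : v ∈ Set.Icc (-1:ℝ) 1) :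
    Set.uIcc u v ⊆ Set.Icc (-1:ℝ) 1 := by
  rw [← Set.uIcc_of_le (by norm_num : (-1:ℝ) ≤ 1)]
  exact Set.uIcc_subset_uIcc (by rwa [Set.uIcc_of_le (by norm_num : (-1:ℝ) ≤ 1)])
    (by rwa [Set.uIcc_of_le (by norm_num : (-1:ℝ) ≤ 1)])


lemma contOn_F_coord {F : (Fin 3 → ℝ) → (Fin 3 → ℝ)}
    (hF : ContDiffOn ℝ 1 F (Set.Icc (-1 : Fin 3 → ℝ) 1)) (c : Fin 3) :
    ContinuousOn (fun z => F z c) (Set.Icc (-1 : Fin 3 → ℝ) 1) :=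
  (continuous_apply c).comp_continuousOn hF.continuousOn

/-- Coefficient identity for component 0. -/
lemma coef0 {F : (Fin 3 → ℝ) → (Fin 3 → ℝ)}
    (hF : ContDiffOn ℝ 1 F (Set.Icc (-1 : Fin 3 → ℝ) 1))
    {x a b c d : ℝ} (hx : x ∈ Set.Icc (-1:ℝ) 1)
    (ha : a ∈ Set.Icc (-1:ℝ) 1) (hb : b ∈ Set.Icc (-1:ℝ) 1)
    (hc : c ∈ Set.Icc (-1:ℝ) 1) (hd : d ∈ Set.Icc (-1:ℝ) 1)
    (hab : a ≤ b) (hcd : c ≤ d) :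
    ∫ s in a..b, ∫ t in c..d,
        (pdOn 1 (fun z => F z 2) ![x, s, t] - pdOn 2 (fun z => F z 1) ![x, s, t])
      = ((∫ t in c..d, F ![x, b, t] 2) - ∫ t in c..d, F ![x, a, t] 2)
        - ((∫ s in a..b, F ![x, s, d] 1) - ∫ s in a..b, F ![x, s, c] 1) := by
  have hsub : Set.Icc a b ⊆ Set.Icc (-1:ℝ) 1 := Set.Icc_subset_Icc ha.1 hb.2
  have hsub' : Set.Icc c d ⊆ Set.Icc (-1:ℝ) 1 := Set.Icc_subset_Icc hc.1 hd.2
  have hmaps : Set.MapsTo (fun p : ℝ × ℝ => ![x, p.1, p.2]) (Set.Icc a b ×ˢ Set.Icc c d)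
      (Set.Icc (-1 : Fin 3 → ℝ) 1) :=
    fun p hp => vec_mem_cube hx (hsub hp.1) (hsub' hp.2)
  have contA : ContinuousOn (fun p : ℝ × ℝ => pdOn 1 (fun z => F z 2) ![x, p.1, p.2])
      (Set.Icc a b ×ˢ Set.Icc c d) :=
    (continuousOn_pdOn hF 1 2).comp (cont_pair0 x).continuousOn hmaps
  have contB : ContinuousOn (fun p : ℝ × ℝ => pdOn 2 (fun z => F z 1) ![x, p.1, p.2])
      (Set.Icc a b ×ˢ Set.Icc c d) :=
    (continuousOn_pdOn hF 2 1).comp (cont_pair0 x).continuousOn hmaps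
  rw [double_sub _ _ hab hcd contA contB]
  congr 1
  -- Part A : swap then FTC in the first (s) slot
  · rw [double_swap _ hab hcd contA]
    have hinner : ∀ t ∈ Set.uIcc c d,
        (∫ s in a..b, pdOn 1 (fun z => F z 2) ![x, s, t])
          = F ![x, b, t] 2 - F ![x, a, t] 2 := by
      intro t ht
      have ht' : t ∈ Set.Icc (-1:ℝ) 1 := uIcc_sub hc hd ht
      have := ftc hF 1 2 (vec_mem_cube hx (by norm_num : (0:ℝ) ∈ Set.Icc (-1:ℝ) 1) ht')
        ha hb hab
      simpa [upd1] using this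
    rw [intervalIntegral.integral_congr hinner]
    have i1 : IntervalIntegrable (fun t => F ![x, b, t] 2) volume c d := by
      apply ContinuousOn.intervalIntegrable
      exact (contOn_F_coord hF 2).comp (cont_line2 x b).continuousOn
        (fun t ht => vec_mem_cube hx hb (uIcc_sub hc hd ht))
    have i2 : IntervalIntegrable (fun t => F ![x, a, t] 2) volume c d := by
      apply ContinuousOn.intervalIntegrable
      exact (contOn_F_coord hF 2).comp (cont_line2 x a).continuousOn
        (fun t ht => vec_mem_cube hx ha (uIcc_sub hc hd ht))
    exact intervalIntegral.integral_sub i1 i2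
  -- Part B : FTC in the inner (t) slot
  · have hinner : ∀ s ∈ Set.uIcc a b,
        (∫ t in c..d, pdOn 2 (fun z => F z 1) ![x, s, t])
          = F ![x, s, d] 1 - F ![x, s, c] 1 := by
      intro s hs
      have hs' : s ∈ Set.Icc (-1:ℝ) 1 := uIcc_sub ha hb hs
      have := ftc hF 2 1 (vec_mem_cube hx hs' (by norm_num : (0:ℝ) ∈ Set.Icc (-1:ℝ) 1))
        hc hd hcd
      simpa [upd2] using this
    rw [intervalIntegral.integral_congr hinner]
    have i1 : IntervalIntegrable (fun s => F ![x, s, d] 1) volume a b := by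
      apply ContinuousOn.intervalIntegrable
      exact (contOn_F_coord hF 1).comp (cont_line1 x d).continuousOn
        (fun s hs => vec_mem_cube hx (uIcc_sub ha hb hs) hd)
    have i2 : IntervalIntegrable (fun s => F ![x, s, c] 1) volume a b := by
      apply ContinuousOn.intervalIntegrable
      exact (contOn_F_coord hF 1).comp (cont_line1 x c).continuousOn
        (fun s hs => vec_mem_cube hx (uIcc_sub ha hb hs) hc)
    exact intervalIntegral.integral_sub i1 i2


/-- Coefficient identity for component 1. -/
lemma coef1 {F : (Fin 3 → ℝ) → (Fin 3 → ℝ)}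
    (hF : ContDiffOn ℝ 1 F (Set.Icc (-1 : Fin 3 → ℝ) 1))
    {x a b c d : ℝ} (hx : x ∈ Set.Icc (-1:ℝ) 1)
    (ha : a ∈ Set.Icc (-1:ℝ) 1) (hb : b ∈ Set.Icc (-1:ℝ) 1)
    (hc : c ∈ Set.Icc (-1:ℝ) 1) (hd : d ∈ Set.Icc (-1:ℝ) 1)
    (hab : a ≤ b) (hcd : c ≤ d) :
    ∫ s in a..b, ∫ t in c..d,
        (pdOn 2 (fun z => F z 0) ![s, x, t] - pdOn 0 (fun z => F z 2) ![s, x, t])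
      = ((∫ s in a..b, F ![s, x, d] 0) - ∫ s in a..b, F ![s, x, c] 0)
        - ((∫ t in c..d, F ![b, x, t] 2) - ∫ t in c..d, F ![a, x, t] 2) := by
  have hsub : Set.Icc a b ⊆ Set.Icc (-1:ℝ) 1 := Set.Icc_subset_Icc ha.1 hb.2
  have hsub' : Set.Icc c d ⊆ Set.Icc (-1:ℝ) 1 := Set.Icc_subset_Icc hc.1 hd.2
  have hmaps : Set.MapsTo (fun p : ℝ × ℝ => ![p.1, x, p.2]) (Set.Icc a b ×ˢ Set.Icc c d)
      (Set.Icc (-1 : Fin 3 → ℝ) 1) :=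
    fun p hp => vec_mem_cube (hsub hp.1) hx (hsub' hp.2)
  have contA : ContinuousOn (fun p : ℝ × ℝ => pdOn 2 (fun z => F z 0) ![p.1, x, p.2])
      (Set.Icc a b ×ˢ Set.Icc c d) :=
    (continuousOn_pdOn hF 2 0).comp (cont_pair1 x).continuousOn hmaps
  have contB : ContinuousOn (fun p : ℝ × ℝ => pdOn 0 (fun z => F z 2) ![p.1, x, p.2])
      (Set.Icc a b ×ˢ Set.Icc c d) :=
    (continuousOn_pdOn hF 0 2).comp (cont_pair1 x).continuousOn hmaps
  rw [double_sub _ _ hab hcd contA contB]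
  congr 1
  -- Part A : FTC in the inner (t) slot, direction 2
  · have hinner : ∀ s ∈ Set.uIcc a b,
        (∫ t in c..d, pdOn 2 (fun z => F z 0) ![s, x, t])
          = F ![s, x, d] 0 - F ![s, x, c] 0 := by
      intro s hs
      have hs' : s ∈ Set.Icc (-1:ℝ) 1 := uIcc_sub ha hb hs
      have := ftc hF 2 0 (vec_mem_cube hs' hx (by norm_num : (0:ℝ) ∈ Set.Icc (-1:ℝ) 1))
        hc hd hcd
      simpa [upd2] using this
    rw [intervalIntegral.integral_congr hinner]
    have i1 : IntervalIntegrable (fun s => F ![s, x, d] 0) volume a b := by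
      apply ContinuousOn.intervalIntegrable
      exact (contOn_F_coord hF 0).comp (cont_line0 x d).continuousOn
        (fun s hs => vec_mem_cube (uIcc_sub ha hb hs) hx hd)
    have i2 : IntervalIntegrable (fun s => F ![s, x, c] 0) volume a b := by
      apply ContinuousOn.intervalIntegrable
      exact (contOn_F_coord hF 0).comp (cont_line0 x c).continuousOn
        (fun s hs => vec_mem_cube (uIcc_sub ha hb hs) hx hc)
    exact intervalIntegral.integral_sub i1 i2
  -- Part B : swap then FTC in the first (s) slot, direction 0
  · rw [double_swap _ hab hcd contB]
    have hinner : ∀ t ∈ Set.uIcc c d,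
        (∫ s in a..b, pdOn 0 (fun z => F z 2) ![s, x, t])
          = F ![b, x, t] 2 - F ![a, x, t] 2 := by
      intro t ht
      have ht' : t ∈ Set.Icc (-1:ℝ) 1 := uIcc_sub hc hd ht
      have := ftc hF 0 2 (vec_mem_cube (by norm_num : (0:ℝ) ∈ Set.Icc (-1:ℝ) 1) hx ht')
        ha hb hab
      simpa [upd0] using this
    rw [intervalIntegral.integral_congr hinner]
    have i1 : IntervalIntegrable (fun t => F ![b, x, t] 2) volume c d := by
      apply ContinuousOn.intervalIntegrable
      exact (contOn_F_coord hF 2).comp (cont_line2 b x).continuousOn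
        (fun t ht => vec_mem_cube hb hx (uIcc_sub hc hd ht))
    have i2 : IntervalIntegrable (fun t => F ![a, x, t] 2) volume c d := by
      apply ContinuousOn.intervalIntegrable
      exact (contOn_F_coord hF 2).comp (cont_line2 a x).continuousOn
        (fun t ht => vec_mem_cube ha hx (uIcc_sub hc hd ht))
    exact intervalIntegral.integral_sub i1 i2

/-- Coefficient identity for component 2. -/
lemma coef2 {F : (Fin 3 → ℝ) → (Fin 3 → ℝ)}
    (hF : ContDiffOn ℝ 1 F (Set.Icc (-1 : Fin 3 → ℝ) 1))
    {x a b c d : ℝ} (hx : x ∈ Set.Icc (-1:ℝ) 1)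
    (ha : a ∈ Set.Icc (-1:ℝ) 1) (hb : b ∈ Set.Icc (-1:ℝ) 1)
    (hc : c ∈ Set.Icc (-1:ℝ) 1) (hd : d ∈ Set.Icc (-1:ℝ) 1)
    (hab : a ≤ b) (hcd : c ≤ d) :
    ∫ s in a..b, ∫ t in c..d,
        (pdOn 0 (fun z => F z 1) ![s, t, x] - pdOn 1 (fun z => F z 0) ![s, t, x])
      = ((∫ t in c..d, F ![b, t, x] 1) - ∫ t in c..d, F ![a, t, x] 1)
        - ((∫ s in a..b, F ![s, d, x] 0) - ∫ s in a..b, F ![s, c, x] 0) := by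
  have hsub : Set.Icc a b ⊆ Set.Icc (-1:ℝ) 1 := Set.Icc_subset_Icc ha.1 hb.2
  have hsub' : Set.Icc c d ⊆ Set.Icc (-1:ℝ) 1 := Set.Icc_subset_Icc hc.1 hd.2
  have hmaps : Set.MapsTo (fun p : ℝ × ℝ => ![p.1, p.2, x]) (Set.Icc a b ×ˢ Set.Icc c d)
      (Set.Icc (-1 : Fin 3 → ℝ) 1) :=
    fun p hp => vec_mem_cube (hsub hp.1) (hsub' hp.2) hx
  have contA : ContinuousOn (fun p : ℝ × ℝ => pdOn 0 (fun z => F z 1) ![p.1, p.2, x])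
      (Set.Icc a b ×ˢ Set.Icc c d) :=
    (continuousOn_pdOn hF 0 1).comp (cont_pair2 x).continuousOn hmaps
  have contB : ContinuousOn (fun p : ℝ × ℝ => pdOn 1 (fun z => F z 0) ![p.1, p.2, x])
      (Set.Icc a b ×ˢ Set.Icc c d) :=
    (continuousOn_pdOn hF 1 0).comp (cont_pair2 x).continuousOn hmaps
  rw [double_sub _ _ hab hcd contA contB]
  congr 1
  -- Part A : swap then FTC in the first (s) slot, direction 0
  · rw [double_swap _ hab hcd contA]
    have hinner : ∀ t ∈ Set.uIcc c d,
        (∫ s in a..b, pdOn 0 (fun z => F z 1) ![s, t, x])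
          = F ![b, t, x] 1 - F ![a, t, x] 1 := by
      intro t ht
      have ht' : t ∈ Set.Icc (-1:ℝ) 1 := uIcc_sub hc hd ht
      have := ftc hF 0 1 (vec_mem_cube (by norm_num : (0:ℝ) ∈ Set.Icc (-1:ℝ) 1) ht' hx)
        ha hb hab
      simpa [upd0] using this
    rw [intervalIntegral.integral_congr hinner]
    have i1 : IntervalIntegrable (fun t => F ![b, t, x] 1) volume c d := by
      apply ContinuousOn.intervalIntegrable
      exact (contOn_F_coord hF 1).comp (cont_line1 b x).continuousOn
        (fun t ht => vec_mem_cube hb (uIcc_sub hc hd ht) hx)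
    have i2 : IntervalIntegrable (fun t => F ![a, t, x] 1) volume c d := by
      apply ContinuousOn.intervalIntegrable
      exact (contOn_F_coord hF 1).comp (cont_line1 a x).continuousOn
        (fun t ht => vec_mem_cube ha (uIcc_sub hc hd ht) hx)
    exact intervalIntegral.integral_sub i1 i2
  -- Part B : FTC in the inner (t) slot, direction 1
  · have hinner : ∀ s ∈ Set.uIcc a b,
        (∫ t in c..d, pdOn 1 (fun z => F z 0) ![s, t, x])
          = F ![s, d, x] 0 - F ![s, c, x] 0 := by
      intro s hs
      have hs' : s ∈ Set.Icc (-1:ℝ) 1 := uIcc_sub ha hb hs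
      have := ftc hF 1 0 (vec_mem_cube hs' (by norm_num : (0:ℝ) ∈ Set.Icc (-1:ℝ) 1) hx)
        hc hd hcd
      simpa [upd1] using this
    rw [intervalIntegral.integral_congr hinner]
    have i1 : IntervalIntegrable (fun s => F ![s, d, x] 0) volume a b := by
      apply ContinuousOn.intervalIntegrable
      exact (contOn_F_coord hF 0).comp (cont_line0 d x).continuousOn
        (fun s hs => vec_mem_cube (uIcc_sub ha hb hs) hd hx)
    have i2 : IntervalIntegrable (fun s => F ![s, c, x] 0) volume a b := by
      apply ContinuousOn.intervalIntegrable
      exact (contOn_F_coord hF 0).comp (cont_line0 c x).continuousOn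
        (fun s hs => vec_mem_cube (uIcc_sub ha hb hs) hc hx)
    exact intervalIntegral.integral_sub i1 i2

lemma sum3_sub {ι κ μ : Type*} [Fintype ι] [Fintype κ] [Fintype μ]
    (X Y : ι → κ → μ → ℝ) (u : ι → ℝ) (v : κ → ℝ) (w : μ → ℝ) :
    ∑ i : ι, ∑ j : κ, ∑ k : μ, (X i j k - Y i j k) * u i * v j * w k
      = (∑ i : ι, ∑ j : κ, ∑ k : μ, X i j k * u i * v j * w k)
        - ∑ i : ι, ∑ j : κ, ∑ k : μ, Y i j k * u i * v j * w k := by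
  rw [← Finset.sum_sub_distrib]
  apply Finset.sum_congr rfl; intro i _
  rw [← Finset.sum_sub_distrib]
  apply Finset.sum_congr rfl; intro j _
  rw [← Finset.sum_sub_distrib]
  apply Finset.sum_congr rfl; intro k _
  ring


end CurlAux3

open CurlAux3

/-- The 3D curl diagram commutes (options 'red' and 'blue' coincide): for
every continuously differentiable vector field `F` on `[-1,1]³`, `p³(curl F) = curl(p² F)`. -/
theorem p3_curl_eq_curl_p2
    (N : ℕ) (hN : 1 ≤ N) (ξ : Fin (N + 1) → ℝ)
    (hmono : StrictMono ξ) (hfirst : ξ 0 = -1) (hlast : ξ (Fin.last N) = 1)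
    (l : Fin (N + 1) → Polynomial ℝ)
    (hdeg : ∀ i, (l i).natDegree ≤ N)
    (hlag : ∀ i j, (l i).eval (ξ j) = if i = j then 1 else 0)
    (h : Fin N → Polynomial ℝ)
    (hdef : ∀ i : Fin N,
      h i = -∑ j : Fin (N + 1), if (j : ℕ) < (i : ℕ) + 1 then derivative (l j) else 0)
    (F : (Fin 3 → ℝ) → (Fin 3 → ℝ))
    (hF : ContDiffOn ℝ 1 F (Set.Icc (-1 : Fin 3 → ℝ) 1)) :
    ∀ y ∈ Set.Icc (-1 : Fin 3 → ℝ) 1,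
      P3 ξ l h (curlOn F) y = curlOn (fun z => P2 ξ l h F z) y := by
  intro y hy
  have hds : ∑ j : Fin (N+1), derivative (l j) = 0 :=
    sum_deriv_l_eq_zero hN ξ hmono l hdeg hlag
  have hximem : ∀ i : Fin (N+1), ξ i ∈ Set.Icc (-1:ℝ) 1 := by
    intro i
    constructor
    · rw [← hfirst]; exact hmono.monotone (Fin.zero_le i)
    · rw [← hlast]; exact hmono.monotone (Fin.le_last i)
  have hxile : ∀ j : Fin N, ξ j.castSucc ≤ ξ j.succ :=
    fun j => (hmono (Fin.castSucc_lt_succ (i := j))).le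
  funext n
  fin_cases n
  -- component 0
  · show P3 ξ l h (curlOn F) y 0 = curlOn (fun z => P2 ξ l h F z) y 0
    simp only [P3, P2, curlOn, Matrix.cons_val_zero, Matrix.cons_val_one, Matrix.head_cons,
      Matrix.cons_val_two, Matrix.tail_cons]
    rw [pdOn1_sum3 (fun i j k => ∫ s in (ξ k.castSucc)..(ξ k.succ), F ![ξ i, ξ j, s] 2) l l h hy,
      pdOn2_sum3 (fun i j k => ∫ s in (ξ j.castSucc)..(ξ j.succ), F ![ξ i, s, ξ k] 1) l h l hy,
      abel3_mid l h hdef hds _ _ _ _, abel3_last l h hdef hds _ _ _ _,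
      ← sum3_sub]
    apply Finset.sum_congr rfl; intro i _
    apply Finset.sum_congr rfl; intro j _
    apply Finset.sum_congr rfl; intro k _
    congr 3
    exact coef0 hF (hximem i) (hximem j.castSucc) (hximem j.succ) (hximem k.castSucc)
      (hximem k.succ) (hxile j) (hxile k)
  -- component 1
  · show P3 ξ l h (curlOn F) y 1 = curlOn (fun z => P2 ξ l h F z) y 1
    simp only [P3, P2, curlOn, Matrix.cons_val_zero, Matrix.cons_val_one, Matrix.head_cons,
      Matrix.cons_val_two, Matrix.tail_cons]
    rw [pdOn2_sum3 (fun i j k => ∫ s in (ξ i.castSucc)..(ξ i.succ), F ![s, ξ j, ξ k] 0) h l l hy,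
      pdOn0_sum3 (fun i j k => ∫ s in (ξ k.castSucc)..(ξ k.succ), F ![ξ i, ξ j, s] 2) l l h hy,
      abel3_last l h hdef hds _ _ _ _, abel3_first l h hdef hds _ _ _ _,
      ← sum3_sub]
    apply Finset.sum_congr rfl; intro i _
    apply Finset.sum_congr rfl; intro j _
    apply Finset.sum_congr rfl; intro k _
    congr 3
    exact coef1 hF (hximem j) (hximem i.castSucc) (hximem i.succ) (hximem k.castSucc)
      (hximem k.succ) (hxile i) (hxile k)
  -- component 2
  · show P3 ξ l h (curlOn F) y 2 = curlOn (fun z => P2 ξ l h F z) y 2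
    simp only [P3, P2, curlOn, Matrix.cons_val_zero, Matrix.cons_val_one, Matrix.head_cons,
      Matrix.cons_val_two, Matrix.tail_cons]
    rw [pdOn0_sum3 (fun i j k => ∫ s in (ξ j.castSucc)..(ξ j.succ), F ![ξ i, s, ξ k] 1) l h l hy,
      pdOn1_sum3 (fun i j k => ∫ s in (ξ i.castSucc)..(ξ i.succ), F ![s, ξ j, ξ k] 0) h l l hy,
      abel3_first l h hdef hds _ _ _ _, abel3_mid l h hdef hds _ _ _ _,
      ← sum3_sub]
    apply Finset.sum_congr rfl; intro i _
    apply Finset.sum_congr rfl; intro j _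
    apply Finset.sum_congr rfl; intro k _
    congr 3
    exact coef2 hF (hximem k) (hximem i.castSucc) (hximem i.succ) (hximem j.castSucc)
      (hximem j.succ) (hxile i) (hxile j)
end

section
/- Free-stream preservation of the mimetic metric terms: for any twice continuously differentiable scalar functions f, g on [−1,1]³, the projected metric vector field p³(curl(f · grad g)) is divergence-free, i.e. ∑_{i=1}^{3} ∂ᵢ [p³(curl(f grad g))]ᵢ = 0; equivalently, p³(curl(f grad g)) = curl(p²(f grad g)) and the divergence of a curl of the (polynomial, hence smooth) field p²(f grad g) vanishes. -/
open Polynomial MeasureTheory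

/-- Gradient (on the cube) of `f : ℝ³ → ℝ`. -/
noncomputable def gradOn (f : (Fin 3 → ℝ) → ℝ) (y : Fin 3 → ℝ) : Fin 3 → ℝ :=
  fun d => pdOn d f y

abbrev I1 : Set ℝ := Set.Icc (-1 : ℝ) 1
abbrev C3 : Set (Fin 3 → ℝ) := Set.Icc (-1 : Fin 3 → ℝ) 1

lemma uniqueDiffOnI1 : UniqueDiffOn ℝ I1 := uniqueDiffOn_Icc (by norm_num)

lemma C3_eq_pi : C3 = Set.pi Set.univ (fun _ : Fin 3 => I1) :=
  (Set.pi_univ_Icc _ _).symm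

lemma uniqueDiffOnC3 : UniqueDiffOn ℝ C3 := by
  rw [C3_eq_pi]
  exact UniqueDiffOn.pi (fun i _ => uniqueDiffOnI1)

lemma mem_C3 {y : Fin 3 → ℝ} : y ∈ C3 ↔ ∀ i, y i ∈ I1 := by
  rw [C3_eq_pi]; simp [Set.mem_pi, Set.mem_Icc, Pi.le_def, forall_and]

lemma update_mem_C3 {y : Fin 3 → ℝ} (hy : y ∈ C3) {d : Fin 3} {s : ℝ} (hs : s ∈ I1) :
    Function.update y d s ∈ C3 := by
  rw [mem_C3] at hy ⊢
  intro i
  rcases eq_or_ne i d with rfl | hne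
  · simpa
  · simpa [Function.update_of_ne hne] using hy i

lemma vec_mem_C3 {a b c : ℝ} (ha : a ∈ I1) (hb : b ∈ I1) (hc : c ∈ I1) :
    ![a, b, c] ∈ C3 := by
  rw [mem_C3]
  intro i
  fin_cases i <;> simpa

lemma myHasDerivAt_update (y : Fin 3 → ℝ) (d : Fin 3) (s : ℝ) :
    HasDerivAt (fun t => Function.update y d t) (Pi.single d 1) s := by
  rw [hasDerivAt_pi]
  intro i
  rcases eq_or_ne i d with rfl | hne
  · simpa using hasDerivAt_id' s
  · simpa [Function.update_of_ne hne, Pi.single_eq_of_ne hne] using hasDerivAt_const s (y i)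

lemma hasDerivWithinAt_line {F : (Fin 3 → ℝ) → ℝ} (hF : ContDiffOn ℝ 1 F C3)
    {y : Fin 3 → ℝ} (hy : y ∈ C3) (d : Fin 3) :
    HasDerivWithinAt (fun s => F (Function.update y d s))
      (fderivWithin ℝ F C3 y (Pi.single d 1)) I1 (y d) := by
  have hdiff := (hF.differentiableOn one_ne_zero) y hy
  have h1 : HasFDerivWithinAt F (fderivWithin ℝ F C3 y) C3 (Function.update y d (y d) ) := by
    rw [Function.update_eq_self]
    exact hdiff.hasFDerivWithinAt
  have h2 := (myHasDerivAt_update y d (y d)).hasDerivWithinAt (s := I1)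
  have h3 : Set.MapsTo (fun t => Function.update y d t) I1 C3 := fun s hs => update_mem_C3 hy hs
  exact h1.comp_hasDerivWithinAt (y d) h2 h3

lemma pdOn_eq_fderivWithin {F : (Fin 3 → ℝ) → ℝ} (hF : ContDiffOn ℝ 1 F C3)
    {y : Fin 3 → ℝ} (hy : y ∈ C3) (d : Fin 3) :
    pdOn d F y = fderivWithin ℝ F C3 y (Pi.single d 1) :=
  (hasDerivWithinAt_line hF hy d).derivWithin (uniqueDiffOnI1 _ ((mem_C3).1 hy d))

lemma pdOn_contOn {F : (Fin 3 → ℝ) → ℝ} (hF : ContDiffOn ℝ 1 F C3) (d : Fin 3) :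
    ContinuousOn (pdOn d F) C3 := by
  have h := (hF.fderivWithin uniqueDiffOnC3 (m := 0) (by norm_num)).continuousOn
  have h2 : ContinuousOn (fun y => fderivWithin ℝ F C3 y (Pi.single d 1)) C3 :=
    h.clm_apply continuousOn_const
  exact h2.congr (fun y hy => pdOn_eq_fderivWithin hF hy d)
-- chunk B appended to a.lean content for testing
lemma pdOn_line_hasDeriv {F : (Fin 3 → ℝ) → ℝ} (hF : ContDiffOn ℝ 1 F C3)
    {y : Fin 3 → ℝ} (hy : y ∈ C3) (d : Fin 3) {s : ℝ} (hs : s ∈ I1) :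
    HasDerivWithinAt (fun t => F (Function.update y d t))
      (pdOn d F (Function.update y d s)) I1 s := by
  have hy' : Function.update y d s ∈ C3 := update_mem_C3 hy hs
  have h := hasDerivWithinAt_line hF hy' d
  have e1 : (fun t => F (Function.update (Function.update y d s) d t))
      = fun t => F (Function.update y d t) := by
    funext t; rw [Function.update_idem]
  have e2 : Function.update y d s d = s := Function.update_self d s y
  rw [e1, e2] at h
  have : pdOn d F (Function.update y d s)
      = fderivWithin ℝ F C3 (Function.update y d s) (Pi.single d 1) :=
    pdOn_eq_fderivWithin hF hy' d
  rw [this]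
  exact h

/-- FTC along a coordinate line inside the cube. -/
lemma ftc_line {F : (Fin 3 → ℝ) → ℝ} (hF : ContDiffOn ℝ 1 F C3)
    {y : Fin 3 → ℝ} (hy : y ∈ C3) (d : Fin 3) {a b : ℝ} (ha : a ∈ I1) (hb : b ∈ I1)
    (hab : a ≤ b) :
    ∫ s in a..b, pdOn d F (Function.update y d s)
      = F (Function.update y d b) - F (Function.update y d a) := by
  have hsub : Set.Icc a b ⊆ I1 := Set.Icc_subset_Icc ha.1 hb.2
  apply intervalIntegral.integral_eq_sub_of_hasDeriv_right_of_le hab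
  · -- continuity on Icc a b
    have : ContinuousOn (fun t => F (Function.update y d t)) I1 := by
      intro s hs
      exact ((pdOn_line_hasDeriv hF hy d hs).differentiableWithinAt).continuousWithinAt
    exact this.mono hsub
  · intro x hx
    have hxI : x ∈ I1 := hsub (Set.mem_Icc.2 ⟨hx.1.le, hx.2.le⟩)
    have h := pdOn_line_hasDeriv hF hy d hxI
    have hmem : I1 ∈ nhds x := by
      refine Filter.mem_of_superset (Ioo_mem_nhds ?_ ?_) Set.Ioo_subset_Icc_self
      · exact lt_of_le_of_lt ha.1 hx.1
      · exact lt_of_lt_of_le hx.2 hb.2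
    exact ((h.hasDerivAt hmem).hasDerivWithinAt)
  · -- integrability
    have hc : ContinuousOn (fun s => pdOn d F (Function.update y d s)) I1 := by
      apply (pdOn_contOn hF d).comp
      · exact (Continuous.continuousOn (by
          exact continuous_pi fun i => by
            rcases eq_or_ne i d with rfl | hne
            · simpa using continuous_id'
            · simpa [Function.update_of_ne hne] using continuous_const))
      · exact fun s hs => update_mem_C3 hy hs
    exact (hc.mono (Set.uIcc_subset_Icc ha hb)).intervalIntegrable
/-- Fubini swap for continuous integrands on a rectangle. -/
lemma double_integral_swap {X : ℝ → ℝ → ℝ} {a b c d : ℝ} (hab : a ≤ b) (hcd : c ≤ d)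
    (hX : ContinuousOn (Function.uncurry X) (Set.Icc a b ×ˢ Set.Icc c d)) :
    ∫ s in a..b, ∫ t in c..d, X s t = ∫ t in c..d, ∫ s in a..b, X s t := by
  rw [intervalIntegral.integral_of_le hab, intervalIntegral.integral_of_le hcd]
  simp_rw [intervalIntegral.integral_of_le hcd, intervalIntegral.integral_of_le hab]
  have hint : Integrable (Function.uncurry X)
      ((volume.restrict (Set.Ioc a b)).prod (volume.restrict (Set.Ioc c d))) := by
    rw [Measure.prod_restrict]
    have : IntegrableOn (Function.uncurry X) (Set.Icc a b ×ˢ Set.Icc c d)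
        (volume.prod volume) :=
      hX.integrableOn_compact' (isCompact_Icc.prod isCompact_Icc)
        (measurableSet_Icc.prod measurableSet_Icc)
    exact this.mono_set (Set.prod_mono Set.Ioc_subset_Icc_self Set.Ioc_subset_Icc_self)
  exact MeasureTheory.integral_integral_swap hint

/-- clamp to `[-1,1]`. -/
noncomputable def cl (u : ℝ) : ℝ := max (-1) (min 1 u)

lemma cl_mem (u : ℝ) : cl u ∈ I1 := by
  constructor
  · exact le_max_left _ _
  · simp only [cl, max_le_iff, min_le_iff]
    norm_num

lemma cl_eq {u : ℝ} (hu : u ∈ I1) : cl u = u := by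
  simp only [cl]
  rw [min_eq_right hu.2, max_eq_right hu.1]

lemma cl_continuous : Continuous cl := continuous_const.max (continuous_const.min continuous_id)

lemma contOn_param_integral {G : (Fin 3 → ℝ) → ℝ} (hG : ContinuousOn G C3)
    {v : ℝ → ℝ → Fin 3 → ℝ}
    (hv : Continuous fun p : ℝ × ℝ => v p.1 p.2)
    (hcl : ∀ s t, v (cl s) (cl t) ∈ C3)
    {c d : ℝ} (hc : c ∈ I1) (hd : d ∈ I1) :
    ContinuousOn (fun s => ∫ t in c..d, G (v s t)) I1 := by
  have hvc : Continuous fun p : ℝ × ℝ => G (v (cl p.1) (cl p.2)) := by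
    apply hG.comp_continuous
    · exact hv.comp ((cl_continuous.comp continuous_fst).prodMk
        (cl_continuous.comp continuous_snd))
    · exact fun p => hcl _ _
  have hcont : Continuous fun s => ∫ t in c..d, G (v (cl s) (cl t)) := by
    apply intervalIntegral.continuous_parametric_intervalIntegral_of_continuous' (μ := volume)
      (f := fun s t => G (v (cl s) (cl t)))
    exact hvc
  apply hcont.continuousOn.congr
  intro s hs
  apply intervalIntegral.integral_congr
  intro t ht
  simp only
  rw [cl_eq hs, cl_eq (Set.uIcc_subset_Icc hc hd ht)]
lemma pdOn_eval {φ : (Fin 3 → ℝ) → ℝ} {d : Fin 3} {y : Fin 3 → ℝ} (hy : y d ∈ I1) {v : ℝ}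
    (H : HasDerivAt (fun s => φ (Function.update y d s)) v (y d)) : pdOn d φ y = v :=
  H.hasDerivWithinAt.derivWithin (uniqueDiffOnI1 _ hy)

lemma pdOn_congr_line {φ ψ : (Fin 3 → ℝ) → ℝ} {d : Fin 3} {y : Fin 3 → ℝ}
    (h : ∀ s, φ (Function.update y d s) = ψ (Function.update y d s)) :
    pdOn d φ y = pdOn d ψ y := by
  unfold pdOn; congr 1; funext s; exact h s

lemma pdOn_congr_on {φ ψ : (Fin 3 → ℝ) → ℝ} {d : Fin 3} {y : Fin 3 → ℝ} (hy : y ∈ C3)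
    (h : ∀ z ∈ C3, φ z = ψ z) : pdOn d φ y = pdOn d ψ y := by
  unfold pdOn
  apply derivWithin_congr
  · intro s hs; exact h _ (update_mem_C3 hy hs)
  · have := h y hy
    rw [show Function.update y d (y d) = y from Function.update_eq_self d y]
    exact this

section sum3

variable {ι₁ ι₂ ι₃ : Type*} [Fintype ι₁] [Fintype ι₂] [Fintype ι₃]
  (c : ι₁ → ι₂ → ι₃ → ℝ) (p : ι₁ → Polynomial ℝ) (q : ι₂ → Polynomial ℝ) (r : ι₃ → Polynomial ℝ)

lemma hasDerivAt_sum3_0 (y : Fin 3 → ℝ) :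
    HasDerivAt (fun s => (fun z => ∑ i, ∑ j, ∑ k,
        c i j k * (p i).eval (z 0) * (q j).eval (z 1) * (r k).eval (z 2))
          (Function.update y 0 s))
      (∑ i, ∑ j, ∑ k,
        c i j k * (derivative (p i)).eval (y 0) * (q j).eval (y 1) * (r k).eval (y 2)) (y 0) := by
  have e : (fun s => (fun z => ∑ i, ∑ j, ∑ k,
      c i j k * (p i).eval (z 0) * (q j).eval (z 1) * (r k).eval (z 2))
        (Function.update y 0 s))
      = fun s => ∑ i, ∑ j, ∑ k,
        c i j k * (p i).eval s * (q j).eval (y 1) * (r k).eval (y 2) := by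
    funext s
    simp [Function.update]
  rw [e]
  apply HasDerivAt.fun_sum; intro i _
  apply HasDerivAt.fun_sum; intro j _
  apply HasDerivAt.fun_sum; intro k _
  exact ((((p i).hasDerivAt (y 0)).const_mul (c i j k)).mul_const
    ((q j).eval (y 1))).mul_const ((r k).eval (y 2))

lemma hasDerivAt_sum3_1 (y : Fin 3 → ℝ) :
    HasDerivAt (fun s => (fun z => ∑ i, ∑ j, ∑ k,
        c i j k * (p i).eval (z 0) * (q j).eval (z 1) * (r k).eval (z 2))
          (Function.update y 1 s))
      (∑ i, ∑ j, ∑ k,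
        c i j k * (p i).eval (y 0) * (derivative (q j)).eval (y 1) * (r k).eval (y 2)) (y 1) := by
  have e : (fun s => (fun z => ∑ i, ∑ j, ∑ k,
      c i j k * (p i).eval (z 0) * (q j).eval (z 1) * (r k).eval (z 2))
        (Function.update y 1 s))
      = fun s => ∑ i, ∑ j, ∑ k,
        c i j k * (p i).eval (y 0) * (q j).eval s * (r k).eval (y 2) := by
    funext s
    simp [Function.update]
  rw [e]
  apply HasDerivAt.fun_sum; intro i _
  apply HasDerivAt.fun_sum; intro j _
  apply HasDerivAt.fun_sum; intro k _
  exact (((q j).hasDerivAt (y 1)).const_mul (c i j k * (p i).eval (y 0))).mul_const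
    ((r k).eval (y 2))

lemma hasDerivAt_sum3_2 (y : Fin 3 → ℝ) :
    HasDerivAt (fun s => (fun z => ∑ i, ∑ j, ∑ k,
        c i j k * (p i).eval (z 0) * (q j).eval (z 1) * (r k).eval (z 2))
          (Function.update y 2 s))
      (∑ i, ∑ j, ∑ k,
        c i j k * (p i).eval (y 0) * (q j).eval (y 1) * (derivative (r k)).eval (y 2)) (y 2) := by
  have e : (fun s => (fun z => ∑ i, ∑ j, ∑ k,
      c i j k * (p i).eval (z 0) * (q j).eval (z 1) * (r k).eval (z 2))
        (Function.update y 2 s))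
      = fun s => ∑ i, ∑ j, ∑ k,
        c i j k * (p i).eval (y 0) * (q j).eval (y 1) * (r k).eval s := by
    funext s
    simp [Function.update]
  rw [e]
  apply HasDerivAt.fun_sum; intro i _
  apply HasDerivAt.fun_sum; intro j _
  apply HasDerivAt.fun_sum; intro k _
  exact ((r k).hasDerivAt (y 2)).const_mul (c i j k * (p i).eval (y 0) * (q j).eval (y 1))

lemma pdOn_sum3_0 {y : Fin 3 → ℝ} (hy : y 0 ∈ I1) :
    pdOn 0 (fun z => ∑ i, ∑ j, ∑ k,
        c i j k * (p i).eval (z 0) * (q j).eval (z 1) * (r k).eval (z 2)) y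
      = ∑ i, ∑ j, ∑ k,
        c i j k * (derivative (p i)).eval (y 0) * (q j).eval (y 1) * (r k).eval (y 2) :=
  pdOn_eval hy (hasDerivAt_sum3_0 c p q r y)

lemma pdOn_sum3_1 {y : Fin 3 → ℝ} (hy : y 1 ∈ I1) :
    pdOn 1 (fun z => ∑ i, ∑ j, ∑ k,
        c i j k * (p i).eval (z 0) * (q j).eval (z 1) * (r k).eval (z 2)) y
      = ∑ i, ∑ j, ∑ k,
        c i j k * (p i).eval (y 0) * (derivative (q j)).eval (y 1) * (r k).eval (y 2) :=
  pdOn_eval hy (hasDerivAt_sum3_1 c p q r y)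

lemma pdOn_sum3_2 {y : Fin 3 → ℝ} (hy : y 2 ∈ I1) :
    pdOn 2 (fun z => ∑ i, ∑ j, ∑ k,
        c i j k * (p i).eval (z 0) * (q j).eval (z 1) * (r k).eval (z 2)) y
      = ∑ i, ∑ j, ∑ k,
        c i j k * (p i).eval (y 0) * (q j).eval (y 1) * (derivative (r k)).eval (y 2) :=
  pdOn_eval hy (hasDerivAt_sum3_2 c p q r y)

end sum3
section discrete

lemma tele_sum {N : ℕ} (c : Fin (N + 1) → ℝ) (m : Fin (N + 1)) :
    ∑ j : Fin N, (if (m : ℕ) ≤ (j : ℕ) then c j.succ - c j.castSucc else 0)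
      = c (Fin.last N) - c m := by
  set d : ℕ → ℝ := fun n => c ⟨min n N, by omega⟩ with hd
  have key : ∀ j : Fin N,
      (if (m : ℕ) ≤ (j : ℕ) then c j.succ - c j.castSucc else 0)
        = (fun n => if (m : ℕ) ≤ n then d (n + 1) - d n else 0) (j : ℕ) := by
    intro j
    have h1 : c j.succ = d ((j : ℕ) + 1) := by
      simp only [hd]; congr 1; exact Fin.ext (by simp [Nat.min_eq_left (Nat.succ_le_of_lt j.2)])
    have h2 : c j.castSucc = d (j : ℕ) := by
      simp only [hd]; congr 1; exact Fin.ext (by simp [Nat.min_eq_left (le_of_lt j.2)])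
    rw [h1, h2]
  rw [Finset.sum_congr rfl (fun j _ => key j),
    Fin.sum_univ_eq_sum_range (fun n => if (m : ℕ) ≤ n then d (n + 1) - d n else 0)]
  have hfil : ∑ n ∈ Finset.range N, (if (m : ℕ) ≤ n then d (n + 1) - d n else 0)
      = ∑ n ∈ Finset.Ico (m : ℕ) N, (d (n + 1) - d n) := by
    rw [← Finset.sum_filter]
    apply Finset.sum_congr _ (fun x _ => rfl)
    ext n
    simp only [Finset.mem_filter, Finset.mem_range, Finset.mem_Ico]
    tauto
  rw [hfil, Finset.sum_Ico_eq_sub _ (by omega : (m : ℕ) ≤ N),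
    Finset.sum_range_sub (fun n => d n), Finset.sum_range_sub (fun n => d n)]
  have hdN : d N = c (Fin.last N) := by
    simp only [hd]; congr 1; exact Fin.ext (by simp)
  have hdm : d (m : ℕ) = c m := by
    simp only [hd]; congr 1; exact Fin.ext (by simp [Nat.min_eq_left (by omega : (m:ℕ) ≤ N)])
  rw [hdN, hdm]; ring

lemma sum_deriv_l_eq_zero {N : ℕ} (ξ : Fin (N + 1) → ℝ) (hmono : StrictMono ξ)
    (l : Fin (N + 1) → Polynomial ℝ) (hdeg : ∀ i, (l i).natDegree ≤ N)
    (hlag : ∀ i j, (l i).eval (ξ j) = if i = j then 1 else 0) :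
    ∑ i, derivative (l i) = 0 := by
  have hp : (∑ i, l i) - Polynomial.C (1:ℝ) = 0 := by
    apply Polynomial.eq_zero_of_natDegree_lt_card_of_eval_eq_zero _ hmono.injective
    · intro j
      simp only [Polynomial.eval_sub, Polynomial.eval_finset_sum, Polynomial.eval_C]
      rw [Finset.sum_congr rfl (fun i _ => hlag i j)]
      simp
    · calc ((∑ i, l i) - Polynomial.C (1:ℝ)).natDegree
          ≤ max (∑ i, l i).natDegree (Polynomial.C (1:ℝ)).natDegree :=
            Polynomial.natDegree_sub_le _ _
        _ ≤ N := by
            apply max_le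
            · exact Polynomial.natDegree_sum_le_of_forall_le _ _ (fun i _ => hdeg i)
            · simp
        _ < Fintype.card (Fin (N + 1)) := by simp
  have hsum : (∑ i, l i) = Polynomial.C (1:ℝ) := by linear_combination (norm := ring_nf) hp
  calc ∑ i, derivative (l i) = derivative (∑ i, l i) := (map_sum derivative l Finset.univ).symm
    _ = 0 := by rw [hsum]; simp

lemma abel_sum_s13 {N : ℕ} (ξ : Fin (N + 1) → ℝ) (hmono : StrictMono ξ)
    (l : Fin (N + 1) → Polynomial ℝ) (hdeg : ∀ i, (l i).natDegree ≤ N)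
    (hlag : ∀ i j, (l i).eval (ξ j) = if i = j then 1 else 0)
    (h : Fin N → Polynomial ℝ)
    (hdef : ∀ i : Fin N,
      h i = -∑ j : Fin (N + 1), if (j : ℕ) < (i : ℕ) + 1 then derivative (l j) else 0)
    (c : Fin (N + 1) → ℝ) (u : ℝ) :
    ∑ j : Fin N, (c j.succ - c j.castSucc) * (h j).eval u
      = ∑ j : Fin (N + 1), c j * (derivative (l j)).eval u := by
  set e : Fin (N + 1) → ℝ := fun m => (derivative (l m)).eval u with he
  have hsum0 : ∑ m, e m = 0 := by
    simp only [he, ← Polynomial.eval_finset_sum]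
    rw [sum_deriv_l_eq_zero ξ hmono l hdeg hlag]
    simp
  have hev : ∀ j : Fin N, (h j).eval u = -∑ m : Fin (N + 1),
      (if (m : ℕ) ≤ (j : ℕ) then e m else 0) := by
    intro j
    rw [hdef j]
    simp only [Polynomial.eval_neg, Polynomial.eval_finset_sum, apply_ite (Polynomial.eval u),
      Polynomial.eval_zero, he, Nat.lt_succ_iff]
  calc ∑ j : Fin N, (c j.succ - c j.castSucc) * (h j).eval u
      = -∑ m : Fin (N + 1),
          (∑ j : Fin N, if (m : ℕ) ≤ (j : ℕ) then c j.succ - c j.castSucc else 0) * e m := by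
        simp only [hev, mul_neg, Finset.mul_sum, mul_ite, mul_zero, Finset.sum_neg_distrib]
        rw [Finset.sum_comm]
        congr 1
        apply Finset.sum_congr rfl; intro m _
        rw [Finset.sum_mul]
        apply Finset.sum_congr rfl; intro j _
        rw [ite_mul, zero_mul]
    _ = -∑ m : Fin (N + 1), (c (Fin.last N) - c m) * e m := by
        congr 1; apply Finset.sum_congr rfl; intro m _; rw [tele_sum]
    _ = (∑ m : Fin (N + 1), c m * e m) - c (Fin.last N) * ∑ m, e m := by
        rw [Finset.mul_sum, ← Finset.sum_sub_distrib, ← Finset.sum_neg_distrib]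
        apply Finset.sum_congr rfl; intro m _; ring
    _ = ∑ j : Fin (N + 1), c j * (derivative (l j)).eval u := by
        rw [hsum0]; simp [he]

end discrete
section vec

lemma vec3_apply0 (a b c : ℝ) : ![a,b,c] 0 = a := rfl
lemma vec3_apply1 (a b c : ℝ) : ![a,b,c] 1 = b := rfl
lemma vec3_apply2 (a b c : ℝ) : ![a,b,c] 2 = c := rfl

lemma upd_vec0 (a b c t : ℝ) : Function.update ![a,b,c] 0 t = ![t,b,c] := by
  funext i; fin_cases i <;> simp [Function.update]
lemma upd_vec1 (a b c t : ℝ) : Function.update ![a,b,c] 1 t = ![a,t,c] := by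
  funext i; fin_cases i <;> simp [Function.update]
lemma upd_vec2 (a b c t : ℝ) : Function.update ![a,b,c] 2 t = ![a,b,t] := by
  funext i; fin_cases i <;> simp [Function.update]

lemma continuous_vec3 {α : Type*} [TopologicalSpace α] {f0 f1 f2 : α → ℝ}
    (h0 : Continuous f0) (h1 : Continuous f1) (h2 : Continuous f2) :
    Continuous fun x => ![f0 x, f1 x, f2 x] := by
  apply continuous_pi
  intro i
  fin_cases i
  · simpa using h0
  · simpa using h1
  · simpa using h2

end vec
/-- Free-stream preservation of the mimetic metric terms: for any twice
continuously differentiable scalar functions `f, g` on `[-1,1]³`, the projected metric field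
`p³(curl (f grad g))` is divergence-free; equivalently,
`p³(curl (f grad g)) = curl (p²(f grad g))` and the divergence of the curl of the
(polynomial, hence smooth) field `p²(f grad g)` vanishes. -/
theorem mimetic_metric_terms_free_stream
    (N : ℕ) (hN : 1 ≤ N) (ξ : Fin (N + 1) → ℝ)
    (hmono : StrictMono ξ) (hfirst : ξ 0 = -1) (hlast : ξ (Fin.last N) = 1)
    (l : Fin (N + 1) → Polynomial ℝ)
    (hdeg : ∀ i, (l i).natDegree ≤ N)
    (hlag : ∀ i j, (l i).eval (ξ j) = if i = j then 1 else 0)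
    (h : Fin N → Polynomial ℝ)
    (hdef : ∀ i : Fin N,
      h i = -∑ j : Fin (N + 1), if (j : ℕ) < (i : ℕ) + 1 then derivative (l j) else 0)
    (f g : (Fin 3 → ℝ) → ℝ)
    (hf : ContDiffOn ℝ 2 f (Set.Icc (-1 : Fin 3 → ℝ) 1))
    (hg : ContDiffOn ℝ 2 g (Set.Icc (-1 : Fin 3 → ℝ) 1)) :
    (∀ y ∈ Set.Icc (-1 : Fin 3 → ℝ) 1,
      (∑ d : Fin 3,
        pdOn d (fun z => P3 ξ l h (curlOn (fun w => f w • gradOn g w)) z d) y) = 0) ∧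
    (∀ y ∈ Set.Icc (-1 : Fin 3 → ℝ) 1,
      P3 ξ l h (curlOn (fun w => f w • gradOn g w)) y
        = curlOn (fun z => P2 ξ l h (fun w => f w • gradOn g w) z) y) ∧
    (∀ y ∈ Set.Icc (-1 : Fin 3 → ℝ) 1,
      (∑ d : Fin 3,
        pdOn d (fun z => curlOn (fun w => P2 ξ l h (fun v => f v • gradOn g v) w) z d) y)
          = 0) := by
  -- the vector field
  set F : (Fin 3 → ℝ) → Fin 3 → ℝ := fun w => f w • gradOn g w with hFdef
  -- regularity of the components of `F`
  have hFc : ∀ d : Fin 3, ContDiffOn ℝ 1 (fun v => F v d) C3 := by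
    intro d
    have hbase : ContDiffOn ℝ 1
        (fun v => f v * fderivWithin ℝ g C3 v (Pi.single d 1)) C3 := by
      apply (hf.of_le one_le_two).mul
      exact (hg.fderivWithin uniqueDiffOnC3 (by norm_num)).clm_apply contDiffOn_const
    apply hbase.congr
    intro v hv
    show (f v • gradOn g v) d = _
    rw [Pi.smul_apply, smul_eq_mul]
    show f v * pdOn d g v = _
    rw [pdOn_eq_fderivWithin (hg.of_le one_le_two) hv d]
  have hξI : ∀ i, ξ i ∈ I1 := by
    intro i
    constructor
    · rw [← hfirst]; exact hmono.monotone (Fin.zero_le i)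
    · rw [← hlast]; exact hmono.monotone (Fin.le_last i)
  have hξle : ∀ j : Fin N, ξ j.castSucc ≤ ξ j.succ :=
    fun j => (hmono (Fin.castSucc_lt_succ (i := j))).le
  -- the P2 coefficients
  set A1 : Fin N → Fin (N + 1) → Fin (N + 1) → ℝ :=
    fun i j k => ∫ s in (ξ i.castSucc)..(ξ i.succ), F ![s, ξ j, ξ k] 0 with hA1
  set A2 : Fin (N + 1) → Fin N → Fin (N + 1) → ℝ :=
    fun i j k => ∫ s in (ξ j.castSucc)..(ξ j.succ), F ![ξ i, s, ξ k] 1 with hA2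
  set A3 : Fin (N + 1) → Fin (N + 1) → Fin N → ℝ :=
    fun i j k => ∫ s in (ξ k.castSucc)..(ξ k.succ), F ![ξ i, ξ j, s] 2 with hA3
  -- P2 components as polynomial sums
  have hP2_0 : ∀ z, P2 ξ l h F z 0 = ∑ i, ∑ j, ∑ k,
      A1 i j k * (h i).eval (z 0) * (l j).eval (z 1) * (l k).eval (z 2) := by
    intro z; rfl
  have hP2_1 : ∀ z, P2 ξ l h F z 1 = ∑ i, ∑ j, ∑ k,
      A2 i j k * (l i).eval (z 0) * (h j).eval (z 1) * (l k).eval (z 2) := by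
    intro z; rfl
  have hP2_2 : ∀ z, P2 ξ l h F z 2 = ∑ i, ∑ j, ∑ k,
      A3 i j k * (l i).eval (z 0) * (l j).eval (z 1) * (h k).eval (z 2) := by
    intro z; rfl
  -- curl of P2 components as polynomial sums
  have hcurlP2_0 : ∀ z : Fin 3 → ℝ, z 1 ∈ I1 → z 2 ∈ I1 →
      curlOn (fun w => P2 ξ l h F w) z 0
        = (∑ i, ∑ j, ∑ k, A3 i j k * (l i).eval (z 0) * (derivative (l j)).eval (z 1)
            * (h k).eval (z 2))
          - (∑ i, ∑ j, ∑ k, A2 i j k * (l i).eval (z 0) * (h j).eval (z 1)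
            * (derivative (l k)).eval (z 2)) := by
    intro z h1 h2
    show pdOn 1 (fun w => P2 ξ l h F w 2) z - pdOn 2 (fun w => P2 ξ l h F w 1) z = _
    rw [show (fun w => P2 ξ l h F w 2) = _ from funext hP2_2,
      show (fun w => P2 ξ l h F w 1) = _ from funext hP2_1,
      pdOn_sum3_1 _ _ _ _ h1, pdOn_sum3_2 _ _ _ _ h2]
  have hcurlP2_1 : ∀ z : Fin 3 → ℝ, z 2 ∈ I1 → z 0 ∈ I1 →
      curlOn (fun w => P2 ξ l h F w) z 1
        = (∑ i, ∑ j, ∑ k, A1 i j k * (h i).eval (z 0) * (l j).eval (z 1)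
            * (derivative (l k)).eval (z 2))
          - (∑ i, ∑ j, ∑ k, A3 i j k * (derivative (l i)).eval (z 0) * (l j).eval (z 1)
            * (h k).eval (z 2)) := by
    intro z h2 h0
    show pdOn 2 (fun w => P2 ξ l h F w 0) z - pdOn 0 (fun w => P2 ξ l h F w 2) z = _
    rw [show (fun w => P2 ξ l h F w 0) = _ from funext hP2_0,
      show (fun w => P2 ξ l h F w 2) = _ from funext hP2_2,
      pdOn_sum3_2 _ _ _ _ h2, pdOn_sum3_0 _ _ _ _ h0]
  have hcurlP2_2 : ∀ z : Fin 3 → ℝ, z 0 ∈ I1 → z 1 ∈ I1 →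
      curlOn (fun w => P2 ξ l h F w) z 2
        = (∑ i, ∑ j, ∑ k, A2 i j k * (derivative (l i)).eval (z 0) * (h j).eval (z 1)
            * (l k).eval (z 2))
          - (∑ i, ∑ j, ∑ k, A1 i j k * (h i).eval (z 0) * (derivative (l j)).eval (z 1)
            * (l k).eval (z 2)) := by
    intro z h0 h1
    show pdOn 0 (fun w => P2 ξ l h F w 1) z - pdOn 1 (fun w => P2 ξ l h F w 0) z = _
    rw [show (fun w => P2 ξ l h F w 1) = _ from funext hP2_1,
      show (fun w => P2 ξ l h F w 0) = _ from funext hP2_0,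
      pdOn_sum3_0 _ _ _ _ h0, pdOn_sum3_1 _ _ _ _ h1]
  -- claim 3 : divergence of the curl of P2 vanishes
  have claim3 : ∀ y ∈ C3,
      (∑ d : Fin 3, pdOn d (fun z => curlOn (fun w => P2 ξ l h F w) z d) y) = 0 := by
    intro y hy
    have hy0 := mem_C3.1 hy 0
    have hy1 := mem_C3.1 hy 1
    have hy2 := mem_C3.1 hy 2
    rw [Fin.sum_univ_three]
    have e0 : pdOn 0 (fun z => curlOn (fun w => P2 ξ l h F w) z 0) y
        = (∑ i, ∑ j, ∑ k, A3 i j k * (derivative (l i)).eval (y 0)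
            * (derivative (l j)).eval (y 1) * (h k).eval (y 2))
          - (∑ i, ∑ j, ∑ k, A2 i j k * (derivative (l i)).eval (y 0) * (h j).eval (y 1)
            * (derivative (l k)).eval (y 2)) := by
      rw [pdOn_congr_line (ψ := fun z =>
        (∑ i, ∑ j, ∑ k, A3 i j k * (l i).eval (z 0) * (derivative (l j)).eval (z 1)
            * (h k).eval (z 2))
          - (∑ i, ∑ j, ∑ k, A2 i j k * (l i).eval (z 0) * (h j).eval (z 1)
            * (derivative (l k)).eval (z 2)))
        (fun s => by
          rw [hcurlP2_0] <;>
            simp [Function.update_of_ne, hy1, hy2])]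
      exact pdOn_eval hy0 ((hasDerivAt_sum3_0 A3 l (fun j => derivative (l j)) h y).sub
        (hasDerivAt_sum3_0 A2 l h (fun k => derivative (l k)) y))
    have e1 : pdOn 1 (fun z => curlOn (fun w => P2 ξ l h F w) z 1) y
        = (∑ i, ∑ j, ∑ k, A1 i j k * (h i).eval (y 0) * (derivative (l j)).eval (y 1)
            * (derivative (l k)).eval (y 2))
          - (∑ i, ∑ j, ∑ k, A3 i j k * (derivative (l i)).eval (y 0)
            * (derivative (l j)).eval (y 1) * (h k).eval (y 2)) := by
      rw [pdOn_congr_line (ψ := fun z =>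
        (∑ i, ∑ j, ∑ k, A1 i j k * (h i).eval (z 0) * (l j).eval (z 1)
            * (derivative (l k)).eval (z 2))
          - (∑ i, ∑ j, ∑ k, A3 i j k * (derivative (l i)).eval (z 0) * (l j).eval (z 1)
            * (h k).eval (z 2)))
        (fun s => by
          rw [hcurlP2_1] <;>
            simp [Function.update_of_ne, hy0, hy2])]
      exact pdOn_eval hy1 ((hasDerivAt_sum3_1 A1 h l (fun k => derivative (l k)) y).sub
        (hasDerivAt_sum3_1 A3 (fun i => derivative (l i)) l h y))
    have e2 : pdOn 2 (fun z => curlOn (fun w => P2 ξ l h F w) z 2) y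
        = (∑ i, ∑ j, ∑ k, A2 i j k * (derivative (l i)).eval (y 0) * (h j).eval (y 1)
            * (derivative (l k)).eval (y 2))
          - (∑ i, ∑ j, ∑ k, A1 i j k * (h i).eval (y 0) * (derivative (l j)).eval (y 1)
            * (derivative (l k)).eval (y 2)) := by
      rw [pdOn_congr_line (ψ := fun z =>
        (∑ i, ∑ j, ∑ k, A2 i j k * (derivative (l i)).eval (z 0) * (h j).eval (z 1)
            * (l k).eval (z 2))
          - (∑ i, ∑ j, ∑ k, A1 i j k * (h i).eval (z 0) * (derivative (l j)).eval (z 1)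
            * (l k).eval (z 2)))
        (fun s => by
          rw [hcurlP2_2] <;>
            simp [Function.update_of_ne, hy0, hy1])]
      exact pdOn_eval hy2 ((hasDerivAt_sum3_2 A2 (fun i => derivative (l i)) h l y).sub
        (hasDerivAt_sum3_2 A1 h (fun j => derivative (l j)) l y))
    rw [e0, e1, e2]
    ring
  -- continuity facts
  have hcF : ∀ d : Fin 3, ContinuousOn (fun v => F v d) C3 := fun d => (hFc d).continuousOn
  have hpd : ∀ (e d : Fin 3), ContinuousOn (pdOn e (fun v => F v d)) C3 :=
    fun e d => pdOn_contOn (hFc d) e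
  -- FTC identity for the coefficients of component 0
  have hB0 : ∀ (i : Fin (N + 1)) (j k : Fin N),
      (∫ s in (ξ j.castSucc)..(ξ j.succ), ∫ t in (ξ k.castSucc)..(ξ k.succ),
        curlOn F ![ξ i, s, t] 0)
      = (A3 i j.succ k - A3 i j.castSucc k) - (A2 i j k.succ - A2 i j k.castSucc) := by
    intro i j k
    have haI := hξI j.castSucc
    have hbI := hξI j.succ
    have hcI := hξI k.castSucc
    have hdI := hξI k.succ
    have hiI := hξI i
    have hab := hξle j
    have hcd := hξle k
    -- inner rewrite
    have e1 : ∀ s ∈ Set.uIcc (ξ j.castSucc) (ξ j.succ),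
        (∫ t in (ξ k.castSucc)..(ξ k.succ), curlOn F ![ξ i, s, t] 0)
        = (∫ t in (ξ k.castSucc)..(ξ k.succ), pdOn 1 (fun v => F v 2) ![ξ i, s, t])
          - (F ![ξ i, s, ξ k.succ] 1 - F ![ξ i, s, ξ k.castSucc] 1) := by
      intro s hs
      have hsI : s ∈ I1 := Set.uIcc_subset_Icc haI hbI hs
      have h1 : (∫ t in (ξ k.castSucc)..(ξ k.succ), curlOn F ![ξ i, s, t] 0)
          = ∫ t in (ξ k.castSucc)..(ξ k.succ),
              (pdOn 1 (fun v => F v 2) ![ξ i, s, t] - pdOn 2 (fun v => F v 1) ![ξ i, s, t]) := by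
        apply intervalIntegral.integral_congr
        intro t _
        rfl
      have intX : IntervalIntegrable (fun t => pdOn 1 (fun v => F v 2) ![ξ i, s, t])
          volume (ξ k.castSucc) (ξ k.succ) := by
        apply ContinuousOn.intervalIntegrable
        apply (hpd 1 2).comp
          (continuous_vec3 continuous_const continuous_const continuous_id).continuousOn
        intro t ht
        exact vec_mem_C3 hiI hsI (Set.uIcc_subset_Icc hcI hdI ht)
      have intY : IntervalIntegrable (fun t => pdOn 2 (fun v => F v 1) ![ξ i, s, t])
          volume (ξ k.castSucc) (ξ k.succ) := by
        apply ContinuousOn.intervalIntegrable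
        apply (hpd 2 1).comp
          (continuous_vec3 continuous_const continuous_const continuous_id).continuousOn
        intro t ht
        exact vec_mem_C3 hiI hsI (Set.uIcc_subset_Icc hcI hdI ht)
      have ftcY : (∫ t in (ξ k.castSucc)..(ξ k.succ), pdOn 2 (fun v => F v 1) ![ξ i, s, t])
          = F ![ξ i, s, ξ k.succ] 1 - F ![ξ i, s, ξ k.castSucc] 1 := by
        have := ftc_line (hFc 1) (vec_mem_C3 hiI hsI hcI) 2 hcI hdI hcd
        simpa [upd_vec2] using this
      rw [h1, intervalIntegral.integral_sub intX intY, ftcY]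
    rw [intervalIntegral.integral_congr e1]
    have intU : IntervalIntegrable
        (fun s => ∫ t in (ξ k.castSucc)..(ξ k.succ), pdOn 1 (fun v => F v 2) ![ξ i, s, t])
        volume (ξ j.castSucc) (ξ j.succ) := by
      apply ContinuousOn.intervalIntegrable
      apply ContinuousOn.mono _ (Set.uIcc_subset_Icc haI hbI)
      apply contOn_param_integral (hpd 1 2) (v := fun s t => ![ξ i, s, t])
        (continuous_vec3 continuous_const continuous_fst continuous_snd)
        (fun s t => vec_mem_C3 hiI (cl_mem s) (cl_mem t)) hcI hdI
    have intV : IntervalIntegrable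
        (fun s => F ![ξ i, s, ξ k.succ] 1 - F ![ξ i, s, ξ k.castSucc] 1)
        volume (ξ j.castSucc) (ξ j.succ) := by
      apply IntervalIntegrable.sub
      · apply ContinuousOn.intervalIntegrable
        apply (hcF 1).comp
          (continuous_vec3 continuous_const continuous_id continuous_const).continuousOn
        intro t ht
        exact vec_mem_C3 hiI (Set.uIcc_subset_Icc haI hbI ht) hdI
      · apply ContinuousOn.intervalIntegrable
        apply (hcF 1).comp
          (continuous_vec3 continuous_const continuous_id continuous_const).continuousOn
        intro t ht
        exact vec_mem_C3 hiI (Set.uIcc_subset_Icc haI hbI ht) hcI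
    rw [intervalIntegral.integral_sub intU intV]
    congr 1
    · -- swap and FTC in the middle variable
      have hXrect : ContinuousOn
          (Function.uncurry fun s t => pdOn 1 (fun v => F v 2) ![ξ i, s, t])
          (Set.Icc (ξ j.castSucc) (ξ j.succ) ×ˢ Set.Icc (ξ k.castSucc) (ξ k.succ)) := by
        apply (hpd 1 2).comp
          (continuous_vec3 continuous_const continuous_fst continuous_snd).continuousOn
        intro p hp
        exact vec_mem_C3 hiI (Set.Icc_subset_Icc haI.1 hbI.2 hp.1)
          (Set.Icc_subset_Icc hcI.1 hdI.2 hp.2)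
      rw [double_integral_swap hab hcd hXrect]
      have e2 : ∀ t ∈ Set.uIcc (ξ k.castSucc) (ξ k.succ),
          (∫ s in (ξ j.castSucc)..(ξ j.succ), pdOn 1 (fun v => F v 2) ![ξ i, s, t])
          = F ![ξ i, ξ j.succ, t] 2 - F ![ξ i, ξ j.castSucc, t] 2 := by
        intro t ht
        have htI : t ∈ I1 := Set.uIcc_subset_Icc hcI hdI ht
        have := ftc_line (hFc 2) (vec_mem_C3 hiI haI htI) 1 haI hbI hab
        simpa [upd_vec1] using this
      rw [intervalIntegral.integral_congr e2]
      have c1 : IntervalIntegrable (fun t => F ![ξ i, ξ j.succ, t] 2)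
          volume (ξ k.castSucc) (ξ k.succ) := by
        apply ContinuousOn.intervalIntegrable
        apply (hcF 2).comp
          (continuous_vec3 continuous_const continuous_const continuous_id).continuousOn
        intro t ht
        exact vec_mem_C3 hiI hbI (Set.uIcc_subset_Icc hcI hdI ht)
      have c2 : IntervalIntegrable (fun t => F ![ξ i, ξ j.castSucc, t] 2)
          volume (ξ k.castSucc) (ξ k.succ) := by
        apply ContinuousOn.intervalIntegrable
        apply (hcF 2).comp
          (continuous_vec3 continuous_const continuous_const continuous_id).continuousOn
        intro t ht
        exact vec_mem_C3 hiI haI (Set.uIcc_subset_Icc hcI hdI ht)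
      rw [intervalIntegral.integral_sub c1 c2]
    · have c1 : IntervalIntegrable (fun s => F ![ξ i, s, ξ k.succ] 1)
          volume (ξ j.castSucc) (ξ j.succ) := by
        apply ContinuousOn.intervalIntegrable
        apply (hcF 1).comp
          (continuous_vec3 continuous_const continuous_id continuous_const).continuousOn
        intro t ht
        exact vec_mem_C3 hiI (Set.uIcc_subset_Icc haI hbI ht) hdI
      have c2 : IntervalIntegrable (fun s => F ![ξ i, s, ξ k.castSucc] 1)
          volume (ξ j.castSucc) (ξ j.succ) := by
        apply ContinuousOn.intervalIntegrable
        apply (hcF 1).comp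
          (continuous_vec3 continuous_const continuous_id continuous_const).continuousOn
        intro t ht
        exact vec_mem_C3 hiI (Set.uIcc_subset_Icc haI hbI ht) hcI
      rw [intervalIntegral.integral_sub c1 c2]
  have hB1 : ∀ (i : Fin N) (j : Fin (N + 1)) (k : Fin N),
      (∫ s in (ξ i.castSucc)..(ξ i.succ), ∫ t in (ξ k.castSucc)..(ξ k.succ),
        curlOn F ![s, ξ j, t] 1)
      = (A1 i j k.succ - A1 i j k.castSucc) - (A3 i.succ j k - A3 i.castSucc j k) := by
    intro i j k
    have haI := hξI i.castSucc
    have hbI := hξI i.succ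
    have hcI := hξI k.castSucc
    have hdI := hξI k.succ
    have hjI := hξI j
    have hab := hξle i
    have hcd := hξle k
    have e1 : ∀ s ∈ Set.uIcc (ξ i.castSucc) (ξ i.succ),
        (∫ t in (ξ k.castSucc)..(ξ k.succ), curlOn F ![s, ξ j, t] 1)
        = (F ![s, ξ j, ξ k.succ] 0 - F ![s, ξ j, ξ k.castSucc] 0)
          - (∫ t in (ξ k.castSucc)..(ξ k.succ), pdOn 0 (fun v => F v 2) ![s, ξ j, t]) := by
      intro s hs
      have hsI : s ∈ I1 := Set.uIcc_subset_Icc haI hbI hs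
      have h1 : (∫ t in (ξ k.castSucc)..(ξ k.succ), curlOn F ![s, ξ j, t] 1)
          = ∫ t in (ξ k.castSucc)..(ξ k.succ),
              (pdOn 2 (fun v => F v 0) ![s, ξ j, t] - pdOn 0 (fun v => F v 2) ![s, ξ j, t]) := by
        apply intervalIntegral.integral_congr
        intro t _
        rfl
      have intX : IntervalIntegrable (fun t => pdOn 2 (fun v => F v 0) ![s, ξ j, t])
          volume (ξ k.castSucc) (ξ k.succ) := by
        apply ContinuousOn.intervalIntegrable
        apply (hpd 2 0).comp
          (continuous_vec3 continuous_const continuous_const continuous_id).continuousOn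
        intro t ht
        exact vec_mem_C3 hsI hjI (Set.uIcc_subset_Icc hcI hdI ht)
      have intY : IntervalIntegrable (fun t => pdOn 0 (fun v => F v 2) ![s, ξ j, t])
          volume (ξ k.castSucc) (ξ k.succ) := by
        apply ContinuousOn.intervalIntegrable
        apply (hpd 0 2).comp
          (continuous_vec3 continuous_const continuous_const continuous_id).continuousOn
        intro t ht
        exact vec_mem_C3 hsI hjI (Set.uIcc_subset_Icc hcI hdI ht)
      have ftcX : (∫ t in (ξ k.castSucc)..(ξ k.succ), pdOn 2 (fun v => F v 0) ![s, ξ j, t])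
          = F ![s, ξ j, ξ k.succ] 0 - F ![s, ξ j, ξ k.castSucc] 0 := by
        have := ftc_line (hFc 0) (vec_mem_C3 hsI hjI hcI) 2 hcI hdI hcd
        simpa [upd_vec2] using this
      rw [h1, intervalIntegral.integral_sub intX intY, ftcX]
    rw [intervalIntegral.integral_congr e1]
    have intU : IntervalIntegrable
        (fun s => ∫ t in (ξ k.castSucc)..(ξ k.succ), pdOn 0 (fun v => F v 2) ![s, ξ j, t])
        volume (ξ i.castSucc) (ξ i.succ) := by
      apply ContinuousOn.intervalIntegrable
      apply ContinuousOn.mono _ (Set.uIcc_subset_Icc haI hbI)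
      apply contOn_param_integral (hpd 0 2) (v := fun s t => ![s, ξ j, t])
        (continuous_vec3 continuous_fst continuous_const continuous_snd)
        (fun s t => vec_mem_C3 (cl_mem s) hjI (cl_mem t)) hcI hdI
    have intV : IntervalIntegrable
        (fun s => F ![s, ξ j, ξ k.succ] 0 - F ![s, ξ j, ξ k.castSucc] 0)
        volume (ξ i.castSucc) (ξ i.succ) := by
      apply IntervalIntegrable.sub
      · apply ContinuousOn.intervalIntegrable
        apply (hcF 0).comp
          (continuous_vec3 continuous_id continuous_const continuous_const).continuousOn
        intro t ht
        exact vec_mem_C3 (Set.uIcc_subset_Icc haI hbI ht) hjI hdI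
      · apply ContinuousOn.intervalIntegrable
        apply (hcF 0).comp
          (continuous_vec3 continuous_id continuous_const continuous_const).continuousOn
        intro t ht
        exact vec_mem_C3 (Set.uIcc_subset_Icc haI hbI ht) hjI hcI
    rw [intervalIntegral.integral_sub intV intU]
    congr 1
    · have c1 : IntervalIntegrable (fun s => F ![s, ξ j, ξ k.succ] 0)
          volume (ξ i.castSucc) (ξ i.succ) := by
        apply ContinuousOn.intervalIntegrable
        apply (hcF 0).comp
          (continuous_vec3 continuous_id continuous_const continuous_const).continuousOn
        intro t ht
        exact vec_mem_C3 (Set.uIcc_subset_Icc haI hbI ht) hjI hdI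
      have c2 : IntervalIntegrable (fun s => F ![s, ξ j, ξ k.castSucc] 0)
          volume (ξ i.castSucc) (ξ i.succ) := by
        apply ContinuousOn.intervalIntegrable
        apply (hcF 0).comp
          (continuous_vec3 continuous_id continuous_const continuous_const).continuousOn
        intro t ht
        exact vec_mem_C3 (Set.uIcc_subset_Icc haI hbI ht) hjI hcI
      rw [intervalIntegral.integral_sub c1 c2]
    · have hXrect : ContinuousOn
          (Function.uncurry fun s t => pdOn 0 (fun v => F v 2) ![s, ξ j, t])
          (Set.Icc (ξ i.castSucc) (ξ i.succ) ×ˢ Set.Icc (ξ k.castSucc) (ξ k.succ)) := by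
        apply (hpd 0 2).comp
          (continuous_vec3 continuous_fst continuous_const continuous_snd).continuousOn
        intro p hp
        exact vec_mem_C3 (Set.Icc_subset_Icc haI.1 hbI.2 hp.1) hjI
          (Set.Icc_subset_Icc hcI.1 hdI.2 hp.2)
      rw [double_integral_swap hab hcd hXrect]
      have e2 : ∀ t ∈ Set.uIcc (ξ k.castSucc) (ξ k.succ),
          (∫ s in (ξ i.castSucc)..(ξ i.succ), pdOn 0 (fun v => F v 2) ![s, ξ j, t])
          = F ![ξ i.succ, ξ j, t] 2 - F ![ξ i.castSucc, ξ j, t] 2 := by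
        intro t ht
        have htI : t ∈ I1 := Set.uIcc_subset_Icc hcI hdI ht
        have := ftc_line (hFc 2) (vec_mem_C3 haI hjI htI) 0 haI hbI hab
        simpa [upd_vec0] using this
      rw [intervalIntegral.integral_congr e2]
      have c1 : IntervalIntegrable (fun t => F ![ξ i.succ, ξ j, t] 2)
          volume (ξ k.castSucc) (ξ k.succ) := by
        apply ContinuousOn.intervalIntegrable
        apply (hcF 2).comp
          (continuous_vec3 continuous_const continuous_const continuous_id).continuousOn
        intro t ht
        exact vec_mem_C3 hbI hjI (Set.uIcc_subset_Icc hcI hdI ht)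
      have c2 : IntervalIntegrable (fun t => F ![ξ i.castSucc, ξ j, t] 2)
          volume (ξ k.castSucc) (ξ k.succ) := by
        apply ContinuousOn.intervalIntegrable
        apply (hcF 2).comp
          (continuous_vec3 continuous_const continuous_const continuous_id).continuousOn
        intro t ht
        exact vec_mem_C3 haI hjI (Set.uIcc_subset_Icc hcI hdI ht)
      rw [intervalIntegral.integral_sub c1 c2]
  have hB2 : ∀ (i j : Fin N) (k : Fin (N + 1)),
      (∫ s in (ξ i.castSucc)..(ξ i.succ), ∫ t in (ξ j.castSucc)..(ξ j.succ),
        curlOn F ![s, t, ξ k] 2)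
      = (A2 i.succ j k - A2 i.castSucc j k) - (A1 i j.succ k - A1 i j.castSucc k) := by
    intro i j k
    have haI := hξI i.castSucc
    have hbI := hξI i.succ
    have hcI := hξI j.castSucc
    have hdI := hξI j.succ
    have hkI := hξI k
    have hab := hξle i
    have hcd := hξle j
    have e1 : ∀ s ∈ Set.uIcc (ξ i.castSucc) (ξ i.succ),
        (∫ t in (ξ j.castSucc)..(ξ j.succ), curlOn F ![s, t, ξ k] 2)
        = (∫ t in (ξ j.castSucc)..(ξ j.succ), pdOn 0 (fun v => F v 1) ![s, t, ξ k])
          - (F ![s, ξ j.succ, ξ k] 0 - F ![s, ξ j.castSucc, ξ k] 0) := by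
      intro s hs
      have hsI : s ∈ I1 := Set.uIcc_subset_Icc haI hbI hs
      have h1 : (∫ t in (ξ j.castSucc)..(ξ j.succ), curlOn F ![s, t, ξ k] 2)
          = ∫ t in (ξ j.castSucc)..(ξ j.succ),
              (pdOn 0 (fun v => F v 1) ![s, t, ξ k] - pdOn 1 (fun v => F v 0) ![s, t, ξ k]) := by
        apply intervalIntegral.integral_congr
        intro t _
        rfl
      have intX : IntervalIntegrable (fun t => pdOn 0 (fun v => F v 1) ![s, t, ξ k])
          volume (ξ j.castSucc) (ξ j.succ) := by
        apply ContinuousOn.intervalIntegrable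
        apply (hpd 0 1).comp
          (continuous_vec3 continuous_const continuous_id continuous_const).continuousOn
        intro t ht
        exact vec_mem_C3 hsI (Set.uIcc_subset_Icc hcI hdI ht) hkI
      have intY : IntervalIntegrable (fun t => pdOn 1 (fun v => F v 0) ![s, t, ξ k])
          volume (ξ j.castSucc) (ξ j.succ) := by
        apply ContinuousOn.intervalIntegrable
        apply (hpd 1 0).comp
          (continuous_vec3 continuous_const continuous_id continuous_const).continuousOn
        intro t ht
        exact vec_mem_C3 hsI (Set.uIcc_subset_Icc hcI hdI ht) hkI
      have ftcY : (∫ t in (ξ j.castSucc)..(ξ j.succ), pdOn 1 (fun v => F v 0) ![s, t, ξ k])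
          = F ![s, ξ j.succ, ξ k] 0 - F ![s, ξ j.castSucc, ξ k] 0 := by
        have := ftc_line (hFc 0) (vec_mem_C3 hsI hcI hkI) 1 hcI hdI hcd
        simpa [upd_vec1] using this
      rw [h1, intervalIntegral.integral_sub intX intY, ftcY]
    rw [intervalIntegral.integral_congr e1]
    have intU : IntervalIntegrable
        (fun s => ∫ t in (ξ j.castSucc)..(ξ j.succ), pdOn 0 (fun v => F v 1) ![s, t, ξ k])
        volume (ξ i.castSucc) (ξ i.succ) := by
      apply ContinuousOn.intervalIntegrable
      apply ContinuousOn.mono _ (Set.uIcc_subset_Icc haI hbI)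
      apply contOn_param_integral (hpd 0 1) (v := fun s t => ![s, t, ξ k])
        (continuous_vec3 continuous_fst continuous_snd continuous_const)
        (fun s t => vec_mem_C3 (cl_mem s) (cl_mem t) hkI) hcI hdI
    have intV : IntervalIntegrable
        (fun s => F ![s, ξ j.succ, ξ k] 0 - F ![s, ξ j.castSucc, ξ k] 0)
        volume (ξ i.castSucc) (ξ i.succ) := by
      apply IntervalIntegrable.sub
      · apply ContinuousOn.intervalIntegrable
        apply (hcF 0).comp
          (continuous_vec3 continuous_id continuous_const continuous_const).continuousOn
        intro t ht
        exact vec_mem_C3 (Set.uIcc_subset_Icc haI hbI ht) hdI hkI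
      · apply ContinuousOn.intervalIntegrable
        apply (hcF 0).comp
          (continuous_vec3 continuous_id continuous_const continuous_const).continuousOn
        intro t ht
        exact vec_mem_C3 (Set.uIcc_subset_Icc haI hbI ht) hcI hkI
    rw [intervalIntegral.integral_sub intU intV]
    congr 1
    · have hXrect : ContinuousOn
          (Function.uncurry fun s t => pdOn 0 (fun v => F v 1) ![s, t, ξ k])
          (Set.Icc (ξ i.castSucc) (ξ i.succ) ×ˢ Set.Icc (ξ j.castSucc) (ξ j.succ)) := by
        apply (hpd 0 1).comp
          (continuous_vec3 continuous_fst continuous_snd continuous_const).continuousOn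
        intro p hp
        exact vec_mem_C3 (Set.Icc_subset_Icc haI.1 hbI.2 hp.1)
          (Set.Icc_subset_Icc hcI.1 hdI.2 hp.2) hkI
      rw [double_integral_swap hab hcd hXrect]
      have e2 : ∀ t ∈ Set.uIcc (ξ j.castSucc) (ξ j.succ),
          (∫ s in (ξ i.castSucc)..(ξ i.succ), pdOn 0 (fun v => F v 1) ![s, t, ξ k])
          = F ![ξ i.succ, t, ξ k] 1 - F ![ξ i.castSucc, t, ξ k] 1 := by
        intro t ht
        have htI : t ∈ I1 := Set.uIcc_subset_Icc hcI hdI ht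
        have := ftc_line (hFc 1) (vec_mem_C3 haI htI hkI) 0 haI hbI hab
        simpa [upd_vec0] using this
      rw [intervalIntegral.integral_congr e2]
      have c1 : IntervalIntegrable (fun t => F ![ξ i.succ, t, ξ k] 1)
          volume (ξ j.castSucc) (ξ j.succ) := by
        apply ContinuousOn.intervalIntegrable
        apply (hcF 1).comp
          (continuous_vec3 continuous_const continuous_id continuous_const).continuousOn
        intro t ht
        exact vec_mem_C3 hbI (Set.uIcc_subset_Icc hcI hdI ht) hkI
      have c2 : IntervalIntegrable (fun t => F ![ξ i.castSucc, t, ξ k] 1)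
          volume (ξ j.castSucc) (ξ j.succ) := by
        apply ContinuousOn.intervalIntegrable
        apply (hcF 1).comp
          (continuous_vec3 continuous_const continuous_id continuous_const).continuousOn
        intro t ht
        exact vec_mem_C3 haI (Set.uIcc_subset_Icc hcI hdI ht) hkI
      rw [intervalIntegral.integral_sub c1 c2]
    · have c1 : IntervalIntegrable (fun s => F ![s, ξ j.succ, ξ k] 0)
          volume (ξ i.castSucc) (ξ i.succ) := by
        apply ContinuousOn.intervalIntegrable
        apply (hcF 0).comp
          (continuous_vec3 continuous_id continuous_const continuous_const).continuousOn
        intro t ht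
        exact vec_mem_C3 (Set.uIcc_subset_Icc haI hbI ht) hdI hkI
      have c2 : IntervalIntegrable (fun s => F ![s, ξ j.castSucc, ξ k] 0)
          volume (ξ i.castSucc) (ξ i.succ) := by
        apply ContinuousOn.intervalIntegrable
        apply (hcF 0).comp
          (continuous_vec3 continuous_id continuous_const continuous_const).continuousOn
        intro t ht
        exact vec_mem_C3 (Set.uIcc_subset_Icc haI hbI ht) hcI hkI
      rw [intervalIntegral.integral_sub c1 c2]
  -- claim 2 : commuting diagram
  have claim2 : ∀ y ∈ C3,
      P3 ξ l h (curlOn F) y = curlOn (fun z => P2 ξ l h F z) y := by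
    intro y hy
    have hy0 := mem_C3.1 hy 0
    have hy1 := mem_C3.1 hy 1
    have hy2 := mem_C3.1 hy 2
    funext d
    fin_cases d
    · -- component 0
      show P3 ξ l h (curlOn F) y 0 = curlOn (fun z => P2 ξ l h F z) y 0
      have hP3_0 : P3 ξ l h (curlOn F) y 0 = ∑ i, ∑ j, ∑ k,
          (∫ s in (ξ j.castSucc)..(ξ j.succ), ∫ t in (ξ k.castSucc)..(ξ k.succ),
            curlOn F ![ξ i, s, t] 0)
          * (l i).eval (y 0) * (h j).eval (y 1) * (h k).eval (y 2) := rfl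
      rw [hP3_0, hcurlP2_0 y hy1 hy2]
      calc (∑ i, ∑ j, ∑ k,
            (∫ s in (ξ j.castSucc)..(ξ j.succ), ∫ t in (ξ k.castSucc)..(ξ k.succ),
              curlOn F ![ξ i, s, t] 0)
            * (l i).eval (y 0) * (h j).eval (y 1) * (h k).eval (y 2))
          = ∑ i, ∑ j, ∑ k,
              (((A3 i j.succ k - A3 i j.castSucc k) - (A2 i j k.succ - A2 i j k.castSucc)))
              * (l i).eval (y 0) * (h j).eval (y 1) * (h k).eval (y 2) := by
            refine Finset.sum_congr rfl fun i _ => Finset.sum_congr rfl fun j _ =>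
              Finset.sum_congr rfl fun k _ => ?_
            rw [hB0 i j k]
        _ = (∑ i, ∑ j : Fin N, ∑ k : Fin N, (A3 i j.succ k - A3 i j.castSucc k)
              * (l i).eval (y 0) * (h j).eval (y 1) * (h k).eval (y 2))
            - (∑ i, ∑ j : Fin N, ∑ k : Fin N, (A2 i j k.succ - A2 i j k.castSucc)
              * (l i).eval (y 0) * (h j).eval (y 1) * (h k).eval (y 2)) := by
            simp only [sub_mul, Finset.sum_sub_distrib]
        _ = _ := by
            congr 1
            · refine Finset.sum_congr rfl fun i _ => ?_
              rw [Finset.sum_comm]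
              conv_rhs => rw [Finset.sum_comm]
              refine Finset.sum_congr rfl fun k _ => ?_
              calc ∑ j : Fin N, (A3 i j.succ k - A3 i j.castSucc k)
                    * (l i).eval (y 0) * (h j).eval (y 1) * (h k).eval (y 2)
                  = (∑ j : Fin N, (A3 i j.succ k - A3 i j.castSucc k) * (h j).eval (y 1))
                      * ((l i).eval (y 0) * (h k).eval (y 2)) := by
                    rw [Finset.sum_mul]
                    exact Finset.sum_congr rfl fun j _ => by ring
                _ = (∑ j : Fin (N + 1), A3 i j k * (derivative (l j)).eval (y 1))
                      * ((l i).eval (y 0) * (h k).eval (y 2)) := by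
                    rw [abel_sum_s13 ξ hmono l hdeg hlag h hdef (fun j => A3 i j k) (y 1)]
                _ = ∑ j : Fin (N + 1), A3 i j k * (l i).eval (y 0)
                      * (derivative (l j)).eval (y 1) * (h k).eval (y 2) := by
                    rw [Finset.sum_mul]
                    exact Finset.sum_congr rfl fun j _ => by ring
            · refine Finset.sum_congr rfl fun i _ => Finset.sum_congr rfl fun j _ => ?_
              calc ∑ k : Fin N, (A2 i j k.succ - A2 i j k.castSucc)
                    * (l i).eval (y 0) * (h j).eval (y 1) * (h k).eval (y 2)
                  = (∑ k : Fin N, (A2 i j k.succ - A2 i j k.castSucc) * (h k).eval (y 2))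
                      * ((l i).eval (y 0) * (h j).eval (y 1)) := by
                    rw [Finset.sum_mul]
                    exact Finset.sum_congr rfl fun k _ => by ring
                _ = (∑ k : Fin (N + 1), A2 i j k * (derivative (l k)).eval (y 2))
                      * ((l i).eval (y 0) * (h j).eval (y 1)) := by
                    rw [abel_sum_s13 ξ hmono l hdeg hlag h hdef (fun k => A2 i j k) (y 2)]
                _ = ∑ k : Fin (N + 1), A2 i j k * (l i).eval (y 0)
                      * (h j).eval (y 1) * (derivative (l k)).eval (y 2) := by
                    rw [Finset.sum_mul]
                    exact Finset.sum_congr rfl fun k _ => by ring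
    · -- component 1
      show P3 ξ l h (curlOn F) y 1 = curlOn (fun z => P2 ξ l h F z) y 1
      have hP3_1 : P3 ξ l h (curlOn F) y 1 = ∑ i, ∑ j, ∑ k,
          (∫ s in (ξ i.castSucc)..(ξ i.succ), ∫ t in (ξ k.castSucc)..(ξ k.succ),
            curlOn F ![s, ξ j, t] 1)
          * (h i).eval (y 0) * (l j).eval (y 1) * (h k).eval (y 2) := rfl
      rw [hP3_1, hcurlP2_1 y hy2 hy0]
      calc (∑ i, ∑ j, ∑ k,
            (∫ s in (ξ i.castSucc)..(ξ i.succ), ∫ t in (ξ k.castSucc)..(ξ k.succ),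
              curlOn F ![s, ξ j, t] 1)
            * (h i).eval (y 0) * (l j).eval (y 1) * (h k).eval (y 2))
          = ∑ i, ∑ j, ∑ k,
              (((A1 i j k.succ - A1 i j k.castSucc) - (A3 i.succ j k - A3 i.castSucc j k)))
              * (h i).eval (y 0) * (l j).eval (y 1) * (h k).eval (y 2) := by
            refine Finset.sum_congr rfl fun i _ => Finset.sum_congr rfl fun j _ =>
              Finset.sum_congr rfl fun k _ => ?_
            rw [hB1 i j k]
        _ = (∑ i : Fin N, ∑ j, ∑ k : Fin N, (A1 i j k.succ - A1 i j k.castSucc)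
              * (h i).eval (y 0) * (l j).eval (y 1) * (h k).eval (y 2))
            - (∑ i : Fin N, ∑ j, ∑ k : Fin N, (A3 i.succ j k - A3 i.castSucc j k)
              * (h i).eval (y 0) * (l j).eval (y 1) * (h k).eval (y 2)) := by
            simp only [sub_mul, Finset.sum_sub_distrib]
        _ = _ := by
            congr 1
            · refine Finset.sum_congr rfl fun i _ => Finset.sum_congr rfl fun j _ => ?_
              calc ∑ k : Fin N, (A1 i j k.succ - A1 i j k.castSucc)
                    * (h i).eval (y 0) * (l j).eval (y 1) * (h k).eval (y 2)
                  = (∑ k : Fin N, (A1 i j k.succ - A1 i j k.castSucc) * (h k).eval (y 2))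
                      * ((h i).eval (y 0) * (l j).eval (y 1)) := by
                    rw [Finset.sum_mul]
                    exact Finset.sum_congr rfl fun k _ => by ring
                _ = (∑ k : Fin (N + 1), A1 i j k * (derivative (l k)).eval (y 2))
                      * ((h i).eval (y 0) * (l j).eval (y 1)) := by
                    rw [abel_sum_s13 ξ hmono l hdeg hlag h hdef (fun k => A1 i j k) (y 2)]
                _ = ∑ k : Fin (N + 1), A1 i j k * (h i).eval (y 0)
                      * (l j).eval (y 1) * (derivative (l k)).eval (y 2) := by
                    rw [Finset.sum_mul]
                    exact Finset.sum_congr rfl fun k _ => by ring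
            · rw [Finset.sum_comm]
              conv_rhs => rw [Finset.sum_comm]
              refine Finset.sum_congr rfl fun j _ => ?_
              rw [Finset.sum_comm]
              conv_rhs => rw [Finset.sum_comm]
              refine Finset.sum_congr rfl fun k _ => ?_
              calc ∑ i : Fin N, (A3 i.succ j k - A3 i.castSucc j k)
                    * (h i).eval (y 0) * (l j).eval (y 1) * (h k).eval (y 2)
                  = (∑ i : Fin N, (A3 i.succ j k - A3 i.castSucc j k) * (h i).eval (y 0))
                      * ((l j).eval (y 1) * (h k).eval (y 2)) := by
                    rw [Finset.sum_mul]
                    exact Finset.sum_congr rfl fun i _ => by ring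
                _ = (∑ i : Fin (N + 1), A3 i j k * (derivative (l i)).eval (y 0))
                      * ((l j).eval (y 1) * (h k).eval (y 2)) := by
                    rw [abel_sum_s13 ξ hmono l hdeg hlag h hdef (fun i => A3 i j k) (y 0)]
                _ = ∑ i : Fin (N + 1), A3 i j k * (derivative (l i)).eval (y 0)
                      * (l j).eval (y 1) * (h k).eval (y 2) := by
                    rw [Finset.sum_mul]
                    exact Finset.sum_congr rfl fun i _ => by ring
    · -- component 2
      show P3 ξ l h (curlOn F) y 2 = curlOn (fun z => P2 ξ l h F z) y 2
      have hP3_2 : P3 ξ l h (curlOn F) y 2 = ∑ i, ∑ j, ∑ k,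
          (∫ s in (ξ i.castSucc)..(ξ i.succ), ∫ t in (ξ j.castSucc)..(ξ j.succ),
            curlOn F ![s, t, ξ k] 2)
          * (h i).eval (y 0) * (h j).eval (y 1) * (l k).eval (y 2) := rfl
      rw [hP3_2, hcurlP2_2 y hy0 hy1]
      calc (∑ i, ∑ j, ∑ k,
            (∫ s in (ξ i.castSucc)..(ξ i.succ), ∫ t in (ξ j.castSucc)..(ξ j.succ),
              curlOn F ![s, t, ξ k] 2)
            * (h i).eval (y 0) * (h j).eval (y 1) * (l k).eval (y 2))
          = ∑ i, ∑ j, ∑ k,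
              (((A2 i.succ j k - A2 i.castSucc j k) - (A1 i j.succ k - A1 i j.castSucc k)))
              * (h i).eval (y 0) * (h j).eval (y 1) * (l k).eval (y 2) := by
            refine Finset.sum_congr rfl fun i _ => Finset.sum_congr rfl fun j _ =>
              Finset.sum_congr rfl fun k _ => ?_
            rw [hB2 i j k]
        _ = (∑ i : Fin N, ∑ j : Fin N, ∑ k, (A2 i.succ j k - A2 i.castSucc j k)
              * (h i).eval (y 0) * (h j).eval (y 1) * (l k).eval (y 2))
            - (∑ i : Fin N, ∑ j : Fin N, ∑ k, (A1 i j.succ k - A1 i j.castSucc k)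
              * (h i).eval (y 0) * (h j).eval (y 1) * (l k).eval (y 2)) := by
            simp only [sub_mul, Finset.sum_sub_distrib]
        _ = _ := by
            congr 1
            · rw [Finset.sum_comm]
              conv_rhs => rw [Finset.sum_comm]
              refine Finset.sum_congr rfl fun j _ => ?_
              rw [Finset.sum_comm]
              conv_rhs => rw [Finset.sum_comm]
              refine Finset.sum_congr rfl fun k _ => ?_
              calc ∑ i : Fin N, (A2 i.succ j k - A2 i.castSucc j k)
                    * (h i).eval (y 0) * (h j).eval (y 1) * (l k).eval (y 2)
                  = (∑ i : Fin N, (A2 i.succ j k - A2 i.castSucc j k) * (h i).eval (y 0))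
                      * ((h j).eval (y 1) * (l k).eval (y 2)) := by
                    rw [Finset.sum_mul]
                    exact Finset.sum_congr rfl fun i _ => by ring
                _ = (∑ i : Fin (N + 1), A2 i j k * (derivative (l i)).eval (y 0))
                      * ((h j).eval (y 1) * (l k).eval (y 2)) := by
                    rw [abel_sum_s13 ξ hmono l hdeg hlag h hdef (fun i => A2 i j k) (y 0)]
                _ = ∑ i : Fin (N + 1), A2 i j k * (derivative (l i)).eval (y 0)
                      * (h j).eval (y 1) * (l k).eval (y 2) := by
                    rw [Finset.sum_mul]
                    exact Finset.sum_congr rfl fun i _ => by ring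
            · refine Finset.sum_congr rfl fun i _ => ?_
              rw [Finset.sum_comm]
              conv_rhs => rw [Finset.sum_comm]
              refine Finset.sum_congr rfl fun k _ => ?_
              calc ∑ j : Fin N, (A1 i j.succ k - A1 i j.castSucc k)
                    * (h i).eval (y 0) * (h j).eval (y 1) * (l k).eval (y 2)
                  = (∑ j : Fin N, (A1 i j.succ k - A1 i j.castSucc k) * (h j).eval (y 1))
                      * ((h i).eval (y 0) * (l k).eval (y 2)) := by
                    rw [Finset.sum_mul]
                    exact Finset.sum_congr rfl fun j _ => by ring
                _ = (∑ j : Fin (N + 1), A1 i j k * (derivative (l j)).eval (y 1))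
                      * ((h i).eval (y 0) * (l k).eval (y 2)) := by
                    rw [abel_sum_s13 ξ hmono l hdeg hlag h hdef (fun j => A1 i j k) (y 1)]
                _ = ∑ j : Fin (N + 1), A1 i j k * (h i).eval (y 0)
                      * (derivative (l j)).eval (y 1) * (l k).eval (y 2) := by
                    rw [Finset.sum_mul]
                    exact Finset.sum_congr rfl fun j _ => by ring
  -- claim 1 from claims 2 and 3
  have claim1 : ∀ y ∈ C3,
      (∑ d : Fin 3, pdOn d (fun z => P3 ξ l h (curlOn F) z d) y) = 0 := by
    intro y hy
    have hrw : ∀ d : Fin 3, pdOn d (fun z => P3 ξ l h (curlOn F) z d) y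
        = pdOn d (fun z => curlOn (fun w => P2 ξ l h F w) z d) y := fun d =>
      pdOn_congr_on hy (fun z hz => by rw [claim2 z hz])
    calc ∑ d : Fin 3, pdOn d (fun z => P3 ξ l h (curlOn F) z d) y
        = ∑ d : Fin 3, pdOn d (fun z => curlOn (fun w => P2 ξ l h F w) z d) y :=
          Finset.sum_congr rfl fun d _ => hrw d
      _ = 0 := claim3 y hy
  exact ⟨claim1, claim2, claim3⟩
end
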